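/- Let n ≥ 3, (T, Σ, ⟠) an n-angulated category, A a full subcategory closed under extensions, and E an almost n-exact structure for A. (1) For every ideal I in A one has the inclusions I ⊆ Φ_E(PB_E(I)) ⊆ ⊥(I^⊥), and both inclusions are equalities when I is a special precovering ideal. (2) For every ideal J in A one has J ⊆ Φ^E(PO_E(J)) ⊆ (⊥J)^⊥, and both inclusions are equalities when J is a special preenveloping ideal. -/

import Mathlib

/-!
Common framework: `n`-angulated categories (Geiss–Keller–Oppermann), almost `n`-exact
structures on an extension closed subcategory, ideals, phantom ideals, (special)
precovers/preenvelopes, relative phantoms, pullback/pushout almost `n`-exact structures.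
-/

open CategoryTheory CategoryTheory.Limits ZeroObject

universe v u

namespace IdealApprox

/-- An `n`-`Σ`-sequence `A₁ → A₂ → ⋯ → Aₙ → ΣA₁` in `T`.  The objects are
`obj 0, …, obj (n-1)`; `mor i : obj i ⟶ obj (i+1)` for `i ≤ n - 2` are the structure
morphisms (indices `≥ n - 1` are junk), and `phantom : obj (n-1) ⟶ S.obj (obj 0)`
is the last morphism `αₙ`. -/
structure NSeq (n : ℕ) (T : Type u) [Category.{v} T] (S : T ⥤ T) where
  obj : ℕ → T
  mor : ∀ i : ℕ, obj i ⟶ obj (i + 1)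
  phantom : obj (n - 1) ⟶ S.obj (obj 0)

/-- A morphism of `n`-`Σ`-sequences. -/
structure NSeqHom {n : ℕ} {T : Type u} [Category.{v} T] {S : T ⥤ T}
    (d e : NSeq n T S) where
  app : ∀ i : ℕ, d.obj i ⟶ e.obj i
  comm : ∀ i : ℕ, i + 2 ≤ n → app i ≫ e.mor i = d.mor i ≫ app (i + 1)
  comm_phantom : app (n - 1) ≫ e.phantom = d.phantom ≫ S.map (app 0)

section Defs

variable {n : ℕ} {T : Type u} [Category.{v} T] [Preadditive T] [HasZeroObject T]
  [HasBinaryBiproducts T] {S : T ⥤ T}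

/-- The componentwise direct sum of two `n`-`Σ`-sequences. -/
noncomputable def biprodSeq (d e : NSeq n T S) : NSeq n T S where
  obj i := d.obj i ⊞ e.obj i
  mor i := biprod.map (d.mor i) (e.mor i)
  phantom := biprod.desc (d.phantom ≫ S.map biprod.inl) (e.phantom ≫ S.map biprod.inr)

/-- The trivial `n`-`Σ`-sequence `A = A → 0 → ⋯ → 0 → ΣA`. -/
noncomputable def trivialNSeq (A : T) : NSeq n T S where
  obj i := match i with
    | 0 => A
    | 1 => A
    | _ + 2 => 0
  mor i := match i with
    | 0 => 𝟙 A
    | _ + 1 => 0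
  phantom := 0

/-- `e` is the left rotation `A₂ → A₃ → ⋯ → Aₙ → ΣA₁ → ΣA₂` (with last morphism
`(-1)ⁿ Σα₁`) of `d`. -/
structure IsLeftRotation (d e : NSeq n T S) : Prop where
  hn : 3 ≤ n
  obj_eq : ∀ i : ℕ, i + 2 ≤ n → e.obj i = d.obj (i + 1)
  obj_last : e.obj (n - 1) = S.obj (d.obj 0)
  mor_eq : ∀ (i : ℕ) (h3 : i + 3 ≤ n),
    e.mor i = eqToHom (obj_eq i (by omega)) ≫ d.mor (i + 1) ≫
      eqToHom (obj_eq (i + 1) (by omega)).symm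
  mor_last : e.mor (n - 2) =
    eqToHom ((obj_eq (n - 2) (by omega)).trans
        (congrArg d.obj (by omega : n - 2 + 1 = n - 1))) ≫
      d.phantom ≫
      eqToHom (obj_last.symm.trans (congrArg e.obj (by omega : n - 1 = n - 2 + 1)))
  phantom_eq : e.phantom =
    eqToHom obj_last ≫ ((-1 : ℤ) ^ n • S.map (d.mor 0)) ≫
      eqToHom (congrArg S.obj (obj_eq 0 (by omega)).symm)

/-- `c` is the mapping cone of the morphism `φ : d ⟶ e` of `n`-`Σ`-sequences, i.e.
`c` has objects `A_{i+1} ⊞ B_i` and the matrix morphisms `[(-α, 0), (φ, β)]`. -/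
structure IsCone {d e : NSeq n T S} (φ : NSeqHom d e) (c : NSeq n T S) : Prop where
  hn : 3 ≤ n
  obj_eq : ∀ i : ℕ, i + 2 ≤ n → c.obj i = (d.obj (i + 1) ⊞ e.obj i)
  obj_last : c.obj (n - 1) = (S.obj (d.obj 0) ⊞ e.obj (n - 1))
  mor_eq : ∀ (i : ℕ) (h3 : i + 3 ≤ n),
    c.mor i = eqToHom (obj_eq i (by omega)) ≫
      (biprod.map (-(d.mor (i + 1))) (e.mor i) +
        biprod.fst ≫ φ.app (i + 1) ≫ biprod.inr) ≫
      eqToHom (obj_eq (i + 1) (by omega)).symm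
  mor_last : c.mor (n - 2) =
    eqToHom (obj_eq (n - 2) (by omega)) ≫
      (biprod.map (eqToHom (congrArg d.obj (by omega : n - 2 + 1 = n - 1)) ≫
          (-(d.phantom))) (e.mor (n - 2)) +
        biprod.fst ≫ eqToHom (congrArg d.obj (by omega : n - 2 + 1 = n - 1)) ≫
          φ.app (n - 1) ≫ eqToHom (congrArg e.obj (by omega : n - 1 = n - 2 + 1)) ≫
          biprod.inr) ≫
      eqToHom (show (S.obj (d.obj 0) ⊞ e.obj (n - 2 + 1)) = c.obj (n - 2 + 1) by
        rw [show n - 2 + 1 = n - 1 from by omega]; exact obj_last.symm)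
  phantom_eq : c.phantom =
    eqToHom obj_last ≫
      biprod.desc ((-(S.map (d.mor 0))) ≫ S.map biprod.inl +
          S.map (φ.app 0) ≫ S.map biprod.inr)
        (e.phantom ≫ S.map biprod.inr) ≫
      eqToHom (congrArg S.obj (obj_eq 0 (by omega)).symm)

/-- The axioms (F1)–(F4) for a class `Ang` of `n`-`Σ`-sequences to be an
`n`-angulation of `(T, S)`; the members of `Ang` are the `n`-angles. -/
structure IsNAngulated (Ang : Set (NSeq n T S)) : Prop where
  /-- (F1)(a): closed under direct sums. -/
  biprod_mem : ∀ d e : NSeq n T S, d ∈ Ang → e ∈ Ang → biprodSeq d e ∈ Ang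
  /-- (F1)(a): closed under direct summands. -/
  summand_mem : ∀ d e : NSeq n T S, e ∈ Ang →
    (∃ (f : NSeqHom d e) (g : NSeqHom e d), ∀ i, f.app i ≫ g.app i = 𝟙 (d.obj i)) →
    d ∈ Ang
  /-- (F1)(b): contains the trivial sequences. -/
  trivial_mem : ∀ A : T, (trivialNSeq A : NSeq n T S) ∈ Ang
  /-- (F1)(c): every morphism is the first morphism of some `n`-angle. -/
  complete : ∀ {X Y : T} (f : X ⟶ Y), ∃ d ∈ Ang, ∃ (h0 : d.obj 0 = X) (h1 : d.obj 1 = Y),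
    d.mor 0 = eqToHom h0 ≫ f ≫ eqToHom h1.symm
  /-- (F2): closed under rotation, in both directions. -/
  rotate : ∀ d e : NSeq n T S, IsLeftRotation d e → (d ∈ Ang ↔ e ∈ Ang)
  /-- (F3)+(F4): any commutative square on the first morphisms of two `n`-angles
  extends to a morphism of `n`-angles whose mapping cone is again an `n`-angle. -/
  fill : ∀ d e : NSeq n T S, d ∈ Ang → e ∈ Ang →
    ∀ (f0 : d.obj 0 ⟶ e.obj 0) (f1 : d.obj 1 ⟶ e.obj 1),
      f0 ≫ e.mor 0 = d.mor 0 ≫ f1 →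
      ∃ φ : NSeqHom d e, φ.app 0 = f0 ∧ φ.app 1 = f1 ∧ ∃ c ∈ Ang, IsCone φ c

/-- All (meaningful) objects of the sequence `d` belong to the subcategory `A`. -/
def objsIn (A : Set T) (d : NSeq n T S) : Prop := ∀ i : ℕ, i < n → d.obj i ∈ A

/-- The class `D_A` of `n`-angles all of whose objects lie in `A`. -/
def DA (Ang : Set (NSeq n T S)) (A : Set T) : Set (NSeq n T S) :=
  {d | d ∈ Ang ∧ objsIn A d}

/-- The full subcategory `A` is closed under extensions in `(T, S, Ang)`. -/
def ClosedUnderExtensions (Ang : Set (NSeq n T S)) (A : Set T) : Prop :=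
  ∀ d ∈ Ang, d.obj 0 ∈ A → d.obj (n - 1) ∈ A → objsIn A d

/-- An almost `n`-exact structure `E ⊆ D_A` for `A`: (N1) closed under direct sums and
containing all split `n`-angles, (N2) closed under base change, (N3) closed under
cobase change. -/
structure IsAlmostNExact (Ang : Set (NSeq n T S)) (A : Set T)
    (E : Set (NSeq n T S)) : Prop where
  subset_DA : E ⊆ DA Ang A
  sum_mem : ∀ d e : NSeq n T S, d ∈ E → e ∈ E → biprodSeq d e ∈ E
  split_mem : ∀ d ∈ DA Ang A, d.phantom = 0 → d ∈ E
  base_change : ∀ d ∈ E, ∀ e ∈ DA Ang A, ∀ (φ : NSeqHom e d) (h : e.obj 0 = d.obj 0),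
    φ.app 0 = eqToHom h → e ∈ E
  cobase_change : ∀ d ∈ E, ∀ e ∈ DA Ang A,
    ∀ (φ : NSeqHom d e) (h : d.obj (n - 1) = e.obj (n - 1)),
      φ.app (n - 1) = eqToHom h → e ∈ E

/-- The class `Φ(E)` of `E`-phantoms, i.e. last morphisms of `n`-angles in `E`. -/
def phant (E : Set (NSeq n T S)) : MorphismProperty T := fun X Y f =>
  ∃ d ∈ E, ∃ (hX : d.obj (n - 1) = X) (hY : S.obj (d.obj 0) = Y),
    f = eqToHom hX.symm ≫ d.phantom ≫ eqToHom hY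

/-- `f` is an `E`-inflation, i.e. the first morphism of some `n`-angle in `E`. -/
def IsInfl (E : Set (NSeq n T S)) {X Y : T} (f : X ⟶ Y) : Prop :=
  ∃ d ∈ E, ∃ (h0 : d.obj 0 = X) (h1 : d.obj 1 = Y),
    f = eqToHom h0.symm ≫ d.mor 0 ≫ eqToHom h1

/-- `f` is an `E`-deflation, i.e. the `(n-1)`-st morphism of some `n`-angle in `E`. -/
def IsDefl (E : Set (NSeq n T S)) {X Y : T} (f : X ⟶ Y) : Prop :=
  ∃ d ∈ E, ∃ (h0 : d.obj (n - 2) = X) (h1 : d.obj (n - 2 + 1) = Y),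
    f = eqToHom h0.symm ≫ d.mor (n - 2) ≫ eqToHom h1

/-- The ideal `E-proj` of `E`-projective morphisms of `A`: morphisms factoring
through every `E`-deflation with the appropriate target. -/
def EProj (A : Set T) (E : Set (NSeq n T S)) : MorphismProperty T := fun X Z f =>
  X ∈ A ∧ Z ∈ A ∧ ∀ ⦃P : T⦄ (p : P ⟶ Z), IsDefl E p → ∃ g : X ⟶ P, g ≫ p = f

/-- The ideal `E-inj` of `E`-injective morphisms of `A`: morphisms factoring
through every `E`-inflation with the appropriate source. -/
def EInj (A : Set T) (E : Set (NSeq n T S)) : MorphismProperty T := fun Z Y f =>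
  Z ∈ A ∧ Y ∈ A ∧ ∀ ⦃Q : T⦄ (m : Z ⟶ Q), IsInfl E m → ∃ g : Q ⟶ Y, m ≫ g = f

/-- An ideal in the full subcategory `A`: a class of morphisms of `A` closed under
sums of parallel morphisms and under composition with arbitrary morphisms of `A`. -/
structure IsIdeal (A : Set T) (I : MorphismProperty T) : Prop where
  src_mem : ∀ ⦃X Y : T⦄ (f : X ⟶ Y), I f → X ∈ A
  tgt_mem : ∀ ⦃X Y : T⦄ (f : X ⟶ Y), I f → Y ∈ A
  add_mem : ∀ ⦃X Y : T⦄ (f g : X ⟶ Y), I f → I g → I (f + g)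
  comp_mem : ∀ ⦃W X Y Z : T⦄ (f : W ⟶ X) (i : X ⟶ Y) (g : Y ⟶ Z),
    W ∈ A → Z ∈ A → I i → I (f ≫ i ≫ g)

/-- A phantom `A`-ideal: a class of morphisms `X → ΣB` with `X, B ∈ A`, closed under
sums and under `(Σg) ∘ φ ∘ f` for morphisms `f, g` of `A`. -/
structure IsPhantomIdeal (S : T ⥤ T) (A : Set T) (P : MorphismProperty T) : Prop where
  mem : ∀ ⦃X Y : T⦄ (φ : X ⟶ Y), P φ → X ∈ A ∧ ∃ B ∈ A, Y = S.obj B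
  add_mem : ∀ ⦃X Y : T⦄ (φ ψ : X ⟶ Y), P φ → P ψ → P (φ + ψ)
  comp_mem : ∀ ⦃X' X B B' : T⦄ (f : X' ⟶ X) (φ : X ⟶ S.obj B) (g : B ⟶ B'),
    X' ∈ A → X ∈ A → B ∈ A → B' ∈ A → P φ → P (f ≫ φ ≫ S.map g)

/-- `i` is an `I`-precover (of its target). -/
def IsPrecover (I : MorphismProperty T) {X A₀ : T} (i : X ⟶ A₀) : Prop :=
  I i ∧ ∀ ⦃X' : T⦄ (i' : X' ⟶ A₀), I i' → ∃ g : X' ⟶ X, g ≫ i = i'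

/-- `j` is an `I`-preenvelope (of its source). -/
def IsPreenvelope (I : MorphismProperty T) {B Y : T} (j : B ⟶ Y) : Prop :=
  I j ∧ ∀ ⦃Y' : T⦄ (j' : B ⟶ Y'), I j' → ∃ g : Y ⟶ Y', j ≫ g = j'

/-- The ideal `I` is precovering: every object of `A` has an `I`-precover. -/
def Precovering (A : Set T) (I : MorphismProperty T) : Prop :=
  ∀ A₀ ∈ A, ∃ (X : T) (i : X ⟶ A₀), IsPrecover I i

/-- The ideal `I` is preenveloping: every object of `A` has an `I`-preenvelope. -/
def Preenveloping (A : Set T) (I : MorphismProperty T) : Prop :=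
  ∀ B ∈ A, ∃ (Y : T) (j : B ⟶ Y), IsPreenvelope I j

/-- A phantom `A`-ideal `P` is precovering: every `ΣA₀` (`A₀ ∈ A`) has a `P`-precover. -/
def PhantPrecovering (S : T ⥤ T) (A : Set T) (P : MorphismProperty T) : Prop :=
  ∀ A₀ ∈ A, ∃ (X : T) (φ : X ⟶ S.obj A₀), IsPrecover P φ

/-- A phantom `A`-ideal `P` is preenveloping: every `B ∈ A` has a `P`-preenvelope. -/
def PhantPreenveloping (S : T ⥤ T) (A : Set T) (P : MorphismProperty T) : Prop :=
  ∀ B ∈ A, ∃ (Y : T) (φ : B ⟶ S.obj Y), IsPreenvelope P φ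

/-- There are enough `E`-injective morphisms: every object of `A` admits an
`E`-injective `E`-inflation out of it. -/
def EnoughInjectives (A : Set T) (E : Set (NSeq n T S)) : Prop :=
  ∀ A₀ ∈ A, ∃ (E₀ : T) (e : A₀ ⟶ E₀), IsInfl E e ∧ EInj A E e

/-- There are enough `E`-projective morphisms: every object of `A` admits an
`E`-projective `E`-deflation onto it. -/
def EnoughProjectives (A : Set T) (E : Set (NSeq n T S)) : Prop :=
  ∀ C ∈ A, ∃ (P : T) (p : P ⟶ C), IsDefl E p ∧ EProj A E p

/-- `f ⊥ g` with respect to `E`: `(Σg) φ f = 0` for all `E`-phantoms `φ`. -/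
def OrthRel (E : Set (NSeq n T S)) {X Z B Y : T} (f : X ⟶ Z) (g : B ⟶ Y) : Prop :=
  ∀ φ : Z ⟶ S.obj B, phant E φ → f ≫ φ ≫ S.map g = 0

/-- The right orthogonal ideal `M^⊥` (with respect to `E`) of a class of morphisms. -/
def perpRight (A : Set T) (E : Set (NSeq n T S)) (M : MorphismProperty T) :
    MorphismProperty T := fun B Y g =>
  B ∈ A ∧ Y ∈ A ∧ ∀ ⦃X Z : T⦄ (m : X ⟶ Z), M m → OrthRel E m g

/-- The left orthogonal ideal `⊥M` (with respect to `E`) of a class of morphisms. -/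
def perpLeft (A : Set T) (E : Set (NSeq n T S)) (M : MorphismProperty T) :
    MorphismProperty T := fun X Z f =>
  X ∈ A ∧ Z ∈ A ∧ ∀ ⦃B Y : T⦄ (m : B ⟶ Y), M m → OrthRel E f m

/-- `i : X ⟶ A₀` is a special `I`-precover with respect to `E`. -/
def IsSpecialPrecover (A : Set T) (E : Set (NSeq n T S)) (I : MorphismProperty T)
    {X A₀ : T} (i : X ⟶ A₀) : Prop :=
  I i ∧ ∃ d ∈ E, ∃ (hX : d.obj (n - 2) = X) (hA : d.obj (n - 2 + 1) = A₀),
    i = eqToHom hX.symm ≫ d.mor (n - 2) ≫ eqToHom hA ∧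
    ∃ (B : T) (φ : d.obj (n - 1) ⟶ S.obj B) (j : B ⟶ d.obj 0),
      phant E φ ∧ perpRight A E I j ∧ d.phantom = φ ≫ S.map j

/-- `j : B₀ ⟶ Y` is a special `J`-preenvelope with respect to `E`. -/
def IsSpecialPreenvelope (A : Set T) (E : Set (NSeq n T S)) (J : MorphismProperty T)
    {B₀ Y : T} (j : B₀ ⟶ Y) : Prop :=
  J j ∧ ∃ d ∈ E, ∃ (hB : d.obj 0 = B₀) (hY : d.obj 1 = Y),
    j = eqToHom hB.symm ≫ d.mor 0 ≫ eqToHom hY ∧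
    ∃ (C : T) (i : d.obj (n - 1) ⟶ C) (φ : C ⟶ S.obj (d.obj 0)),
      perpLeft A E J i ∧ phant E φ ∧ d.phantom = i ≫ φ

/-- The ideal `I` is special precovering with respect to `E`. -/
def SpecialPrecovering (A : Set T) (E : Set (NSeq n T S))
    (I : MorphismProperty T) : Prop :=
  ∀ A₀ ∈ A, ∃ (X : T) (i : X ⟶ A₀), IsSpecialPrecover A E I i

/-- The ideal `J` is special preenveloping with respect to `E`. -/
def SpecialPreenveloping (A : Set T) (E : Set (NSeq n T S))
    (J : MorphismProperty T) : Prop :=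
  ∀ B ∈ A, ∃ (Y : T) (j : B ⟶ Y), IsSpecialPreenvelope A E J j

/-- `(I, J)` is an ideal cotorsion pair with respect to `E`: `J = I^⊥` and `I = ⊥J`. -/
def IsIdealCotorsionPair (A : Set T) (E : Set (NSeq n T S))
    (I J : MorphismProperty T) : Prop :=
  J = perpRight A E I ∧ I = perpLeft A E J

/-- The ideal `Φ_E(F)` of `F`-phantoms relative to `E`. -/
def relPhant (A : Set T) (E F : Set (NSeq n T S)) : MorphismProperty T := fun X Z f =>
  X ∈ A ∧ Z ∈ A ∧ ∀ ⦃B : T⦄ (h : Z ⟶ S.obj B), phant E h → phant F (f ≫ h)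

/-- The ideal `Φ^E(F)` of `F`-cophantoms relative to `E`. -/
def relCophant (A : Set T) (E F : Set (NSeq n T S)) : MorphismProperty T := fun Z Y f =>
  Z ∈ A ∧ Y ∈ A ∧ ∀ ⦃W : T⦄ (h : W ⟶ Z), phant E (S.map h) → phant F (S.map (h ≫ f))

/-- The pullback almost `n`-exact structure `PB_E(I)` associated to an ideal `I`:
`n`-angles in `E` whose phantom factors as `ψ ∘ i` with `i ∈ I`, `ψ ∈ Φ(E)`. -/
def PB (E : Set (NSeq n T S)) (I : MorphismProperty T) : Set (NSeq n T S) :=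
  {d | d ∈ E ∧ ∃ (C : T) (i : d.obj (n - 1) ⟶ C) (ψ : C ⟶ S.obj (d.obj 0)),
    I i ∧ phant E ψ ∧ d.phantom = i ≫ ψ}

/-- The pushout almost `n`-exact structure `PO_E(J)` associated to an ideal `J`:
`n`-angles in `E` whose phantom factors as `(Σj) ∘ ψ` with `j ∈ J`, `ψ ∈ Φ(E)`. -/
def PO (E : Set (NSeq n T S)) (J : MorphismProperty T) : Set (NSeq n T S) :=
  {d | d ∈ E ∧ ∃ (B : T) (ψ : d.obj (n - 1) ⟶ S.obj B) (j : B ⟶ d.obj 0),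
    phant E ψ ∧ J j ∧ d.phantom = ψ ≫ S.map j}

/-- `E^I`: the `n`-angles from `A` whose phantom `φ` satisfies `(Σi) φ = 0` for
all `i ∈ I`. -/
def EUp (Ang : Set (NSeq n T S)) (A : Set T) (I : MorphismProperty T) :
    Set (NSeq n T S) :=
  {d | d ∈ DA Ang A ∧ ∀ ⦃Y : T⦄ (i : d.obj 0 ⟶ Y), I i → d.phantom ≫ S.map i = 0}

/-- `E_I`: the `n`-angles from `A` whose phantom `φ` satisfies `φ i = 0` for
all `i ∈ I`. -/
def EDown (Ang : Set (NSeq n T S)) (A : Set T) (I : MorphismProperty T) :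
    Set (NSeq n T S) :=
  {d | d ∈ DA Ang A ∧ ∀ ⦃X : T⦄ (i : X ⟶ d.obj (n - 1)), I i → i ≫ d.phantom = 0}

/-- `D_A(P)`: the `n`-angles from `A` whose phantom lies in `P`. -/
def DAI (Ang : Set (NSeq n T S)) (A : Set T) (P : MorphismProperty T) :
    Set (NSeq n T S) :=
  {d | d ∈ DA Ang A ∧ P d.phantom}

/-- `e : A₀ ⟶ E₀` is a special `H`-injective morphism with respect to `E`: it is
`H`-injective and embeds as the first morphism of an `n`-angle from `A` admitting a
morphism of `n`-angles, with identity ends, to an `n`-angle in `E` whose component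
at position `n` lies in `Φ_E(H)`. -/
def IsSpecialInj (Ang : Set (NSeq n T S)) (A : Set T) (E H : Set (NSeq n T S))
    {A₀ E₀ : T} (e : A₀ ⟶ E₀) : Prop :=
  EInj A H e ∧ ∃ d' ∈ DA Ang A, ∃ (h0 : d'.obj 0 = A₀) (h1 : d'.obj 1 = E₀),
    e = eqToHom h0.symm ≫ d'.mor 0 ≫ eqToHom h1 ∧
    ∃ d ∈ E, ∃ (φ : NSeqHom d' d) (hh : d'.obj 0 = d.obj 0),
      φ.app 0 = eqToHom hh ∧ relPhant A E H (φ.app (n - 1))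

/-- `p : P₀ ⟶ C` is a special `H`-projective morphism with respect to `E` (dual of
`IsSpecialInj`). -/
def IsSpecialProj (Ang : Set (NSeq n T S)) (A : Set T) (E H : Set (NSeq n T S))
    {P₀ C : T} (p : P₀ ⟶ C) : Prop :=
  EProj A H p ∧ ∃ d' ∈ DA Ang A, ∃ (h0 : d'.obj (n - 2) = P₀) (h1 : d'.obj (n - 2 + 1) = C),
    p = eqToHom h0.symm ≫ d'.mor (n - 2) ≫ eqToHom h1 ∧
    ∃ d ∈ E, ∃ (φ : NSeqHom d d') (hh : d.obj (n - 1) = d'.obj (n - 1)),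
      φ.app (n - 1) = eqToHom hh ∧ relCophant A E H (φ.app 0)

/-- There are enough special `H`-injective morphisms (with respect to `E`). -/
def EnoughSpecialInj (Ang : Set (NSeq n T S)) (A : Set T)
    (E H : Set (NSeq n T S)) : Prop :=
  ∀ A₀ ∈ A, ∃ (E₀ : T) (e : A₀ ⟶ E₀), IsSpecialInj Ang A E H e

/-- There are enough special `H`-projective morphisms (with respect to `E`). -/
def EnoughSpecialProj (Ang : Set (NSeq n T S)) (A : Set T)
    (E H : Set (NSeq n T S)) : Prop :=
  ∀ C ∈ A, ∃ (P₀ : T) (p : P₀ ⟶ C), IsSpecialProj Ang A E H p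

end Defs


section Aux
set_option linter.unusedSectionVars false
set_option linter.unusedVariables false

open CategoryTheory CategoryTheory.Limits ZeroObject

variable {n : ℕ} {T : Type u} [Category.{v} T] [Preadditive T] [HasZeroObject T]
  [HasBinaryBiproducts T] {S : T ⥤ T}

/-- cancel a `(-1)^n` scalar. -/
lemma neg_one_pow_mul_self_eq_one : ((-1 : ℤ) ^ n) * ((-1 : ℤ) ^ n) = 1 := by
  rw [← pow_add]; exact Even.neg_one_pow ⟨n, rfl⟩

lemma sign_cancel {X Y : T} {f g : X ⟶ Y}
    (h : ((-1 : ℤ) ^ n) • f = ((-1 : ℤ) ^ n) • g) : f = g := by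
  have h2 := congrArg (fun x => ((-1 : ℤ) ^ n) • x) h
  simpa [smul_smul, neg_one_pow_mul_self_eq_one] using h2

lemma id_eq_zero_of_eq_zero {X : T} (h : X = (0 : T)) : 𝟙 X = 0 := by
  subst h; exact Limits.id_zero

/-! ### Rotations -/

/-- Objects of the `k`-fold left rotation of an `n`-`Σ`-sequence. -/
noncomputable def rotKObj (d : NSeq n T S) (k i : ℕ) : T :=
  if i + k ≤ n - 1 then d.obj (i + k)
  else if i ≤ n - 1 then S.obj (d.obj (i + k - n)) else 0

lemma rotKObj_lo {d : NSeq n T S} {k i : ℕ} (h : i + k ≤ n - 1) :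
    rotKObj d k i = d.obj (i + k) := if_pos h

lemma rotKObj_lo' {d : NSeq n T S} {k i j : ℕ} (h : i + k ≤ n - 1) (hj : i + k = j) :
    rotKObj d k i = d.obj j := by subst hj; exact if_pos h

lemma rotKObj_hi {d : NSeq n T S} {k i : ℕ} (hn : 1 ≤ n) (h1 : i ≤ n - 1) (h2 : n ≤ i + k) (j : ℕ)
    (hj : i + k - n = j) : rotKObj d k i = S.obj (d.obj j) := by
  rw [rotKObj, if_neg (by omega), if_pos h1, hj]

lemma rotKObj_junk {d : NSeq n T S} {k i : ℕ} (hn : 1 ≤ n) (h1 : n - 1 < i) :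
    rotKObj d k i = 0 := by rw [rotKObj, if_neg (by omega), if_neg (by omega)]

/-- The `k`-fold left rotation (sensible for `1 ≤ k ≤ n - 1`). -/
@[reducible] noncomputable def rotK (hn : 3 ≤ n) (k : ℕ) (d : NSeq n T S) : NSeq n T S where
  obj := rotKObj d k
  mor i :=
    if h1 : i + k ≤ n - 2 then
      eqToHom (rotKObj_lo (by omega)) ≫ d.mor (i + k) ≫
        eqToHom ((rotKObj_lo (show i + 1 + k ≤ n - 1 by omega)).trans
          (congrArg d.obj (by omega))).symm
    else if h2 : i + k = n - 1 ∧ i ≤ n - 2 then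
      eqToHom ((rotKObj_lo (by omega)).trans (congrArg d.obj h2.1)) ≫ d.phantom ≫
        eqToHom (rotKObj_hi (by omega) (by omega) (by omega) 0 (by omega)).symm
    else if h3 : i ≤ n - 2 ∧ n ≤ i + k then
      eqToHom (rotKObj_hi (by omega) (by omega) (by omega) (i + k - n) rfl) ≫
        (((-1 : ℤ) ^ n) • S.map (d.mor (i + k - n))) ≫
        eqToHom (rotKObj_hi (by omega) (show i + 1 ≤ n - 1 by omega) (by omega)
          (i + k - n + 1) (by omega)).symm
    else 0
  phantom :=
    if hk : 1 ≤ k ∧ k ≤ n - 1 then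
      eqToHom (rotKObj_hi (by omega) (by omega) (by omega) (k - 1) (by omega)) ≫
        (((-1 : ℤ) ^ n) • S.map (d.mor (k - 1))) ≫
        eqToHom (congrArg S.obj ((congrArg d.obj (show k - 1 + 1 = 0 + k by omega)).trans
          (rotKObj_lo (show 0 + k ≤ n - 1 by omega)).symm))
    else 0

section RotK

variable (hn : 3 ≤ n) (d : NSeq n T S)

lemma rotK_mor_lo {k i j : ℕ} (h : i + k ≤ n - 2) (hj : i + k = j) :
    (rotK hn k d).mor i =
      eqToHom (rotKObj_lo' (by omega) hj) ≫ d.mor j ≫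
        eqToHom (rotKObj_lo' (show i + 1 + k ≤ n - 1 by omega) (by omega)).symm := by
  subst hj
  exact dif_pos h

lemma rotK_mor_mid {k i : ℕ} (h1 : i + k = n - 1) (h2 : i ≤ n - 2) :
    (rotK hn k d).mor i =
      eqToHom (rotKObj_lo' (by omega) h1) ≫ d.phantom ≫
        eqToHom (rotKObj_hi (by omega) (by omega) (by omega) 0 (by omega)).symm := by
  exact (dif_neg (by omega)).trans (dif_pos ⟨h1, h2⟩)

lemma rotK_mor_hi {k i j : ℕ} (h1 : i ≤ n - 2) (h2 : n ≤ i + k) (hj : i + k - n = j) :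
    (rotK hn k d).mor i =
      eqToHom (rotKObj_hi (by omega) (by omega) (by omega) j hj) ≫
        (((-1 : ℤ) ^ n) • S.map (d.mor j)) ≫
        eqToHom (rotKObj_hi (by omega) (show i + 1 ≤ n - 1 by omega) (by omega) (j + 1) (by omega)).symm := by
  subst hj
  exact (dif_neg (by omega)).trans ((dif_neg (by omega)).trans (dif_pos ⟨h1, h2⟩))

lemma rotK_phantom {k j : ℕ} (hk1 : 1 ≤ k) (hk2 : k ≤ n - 1) (hj : k - 1 = j) :
    (rotK hn k d).phantom =
      eqToHom (rotKObj_hi (by omega) (by omega) (by omega) j (by omega)) ≫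
        (((-1 : ℤ) ^ n) • S.map (d.mor j)) ≫
        eqToHom (congrArg S.obj ((congrArg d.obj (show j + 1 = 0 + k by omega)).trans
          (rotKObj_lo (show 0 + k ≤ n - 1 by omega)).symm)) := by
  subst hj
  exact dif_pos ⟨hk1, hk2⟩

end RotK

end Aux

section Aux2

open CategoryTheory CategoryTheory.Limits ZeroObject
set_option linter.unusedSectionVars false
set_option linter.unusedVariables false
set_option maxHeartbeats 1000000

variable {n : ℕ} {T : Type u} [Category.{v} T] [Preadditive T] [HasZeroObject T]
  [HasBinaryBiproducts T] {S : T ⥤ T}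

lemma isLeftRotation_rotK_one (hn : 3 ≤ n) (d : NSeq n T S) :
    IsLeftRotation d (rotK hn 1 d) :=
  { hn := hn
    obj_eq := fun i h => rotKObj_lo' (by omega) rfl
    obj_last := rotKObj_hi (by omega) (by omega) (by omega) 0 (by omega)
    mor_eq := fun i h3 => by rw [rotK_mor_lo hn d (by omega) rfl]
    mor_last := by rw [rotK_mor_mid hn d (by omega) (by omega)]
    phantom_eq := by rw [rotK_phantom hn d (by omega) (by omega) (show 1 - 1 = 0 from rfl)] }

lemma isLeftRotation_rotK_succ (hn : 3 ≤ n) (d : NSeq n T S) (k : ℕ)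
    (hk1 : 1 ≤ k) (hk2 : k + 1 ≤ n - 1) :
    IsLeftRotation (rotK hn k d) (rotK hn (k + 1) d) := by
  have obj_eq : ∀ i, i + 2 ≤ n → (rotK hn (k+1) d).obj i = (rotK hn k d).obj (i + 1) := by
    intro i h
    by_cases hc : i + (k + 1) ≤ n - 1
    · rw [show (rotK hn (k+1) d).obj i = rotKObj d (k+1) i from rfl,
        rotKObj_lo' hc rfl,
        show (rotK hn k d).obj (i+1) = rotKObj d k (i+1) from rfl,
        rotKObj_lo' (show i + 1 + k ≤ n - 1 by omega) (show i + 1 + k = i + (k+1) by omega)]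
    · rw [show (rotK hn (k+1) d).obj i = rotKObj d (k+1) i from rfl,
        rotKObj_hi (by omega) (by omega) (by omega) (i + k + 1 - n) (by omega),
        show (rotK hn k d).obj (i+1) = rotKObj d k (i+1) from rfl,
        rotKObj_hi (by omega) (by omega) (by omega) (i + k + 1 - n) (by omega)]
  have obj_last : (rotK hn (k+1) d).obj (n - 1) = S.obj ((rotK hn k d).obj 0) := by
    rw [show (rotK hn (k+1) d).obj (n-1) = rotKObj d (k+1) (n-1) from rfl,
      rotKObj_hi (by omega) (by omega) (by omega) k (by omega),
      show (rotK hn k d).obj 0 = rotKObj d k 0 from rfl,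
      rotKObj_lo' (by omega) (show 0 + k = k by omega)]
  refine { hn := hn, obj_eq := obj_eq, obj_last := obj_last,
           mor_eq := ?_, mor_last := ?_, phantom_eq := ?_ }
  · intro i h3
    by_cases hc1 : i + (k + 1) ≤ n - 2
    · rw [rotK_mor_lo hn d hc1 rfl, rotK_mor_lo hn d (show i+1+k ≤ n - 2 by omega) (show i+1+k = i+(k+1) by omega)]
      simp [eqToHom_trans, eqToHom_trans_assoc]
    · by_cases hc2 : i + (k + 1) = n - 1
      · rw [rotK_mor_mid hn d hc2 (by omega),
          rotK_mor_mid hn d (show i+1+k = n-1 by omega) (by omega)]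
        simp [eqToHom_trans, eqToHom_trans_assoc]
      · rw [rotK_mor_hi hn d (by omega) (by omega) (rfl : i + (k+1) - n = i + (k+1) - n),
          rotK_mor_hi hn d (show i+1 ≤ n-2 by omega) (by omega)
            (show i + 1 + k - n = i + (k+1) - n by omega)]
        simp [eqToHom_trans, eqToHom_trans_assoc]
  · rw [rotK_mor_hi hn d (by omega) (by omega) (show n - 2 + (k+1) - n = k - 1 by omega),
      rotK_phantom hn d (by omega) (by omega) rfl]
    simp [eqToHom_trans, eqToHom_trans_assoc]
  · rw [rotK_phantom hn d (by omega) (by omega) (show k + 1 - 1 = k by omega),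
      rotK_mor_lo hn d (show 0 + k ≤ n - 2 by omega) (show 0 + k = k by omega)]
    simp only [Functor.map_comp, eqToHom_map, Preadditive.comp_zsmul,
      Preadditive.zsmul_comp, Category.assoc, eqToHom_trans, eqToHom_trans_assoc]

lemma rotK_mem {Ang : Set (NSeq n T S)} (hAng : IsNAngulated Ang) (hn : 3 ≤ n)
    (d : NSeq n T S) : ∀ (k : ℕ), 1 ≤ k → k ≤ n - 1 → (d ∈ Ang ↔ rotK hn k d ∈ Ang) := by
  intro k
  induction k with
  | zero => omega
  | succ m ih =>
    intro _ hk2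
    rcases Nat.eq_zero_or_pos m with hm | hm
    · subst hm; exact hAng.rotate _ _ (isLeftRotation_rotK_one hn d)
    · exact (ih hm (by omega)).trans
        (hAng.rotate _ _ (isLeftRotation_rotK_succ hn d m hm hk2))

lemma mem_of_isos {Ang : Set (NSeq n T S)} (hAng : IsNAngulated Ang)
    {d e : NSeq n T S} (he : e ∈ Ang) (ι : ∀ i, d.obj i ≅ e.obj i)
    (hcomm : ∀ i, i + 2 ≤ n → (ι i).hom ≫ e.mor i = d.mor i ≫ (ι (i+1)).hom)
    (hph : (ι (n-1)).hom ≫ e.phantom = d.phantom ≫ S.map ((ι 0).hom)) : d ∈ Ang := by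
  refine hAng.summand_mem d e he
    ⟨⟨fun i => (ι i).hom, hcomm, hph⟩, ⟨fun i => (ι i).inv, ?_, ?_⟩,
      fun i => (ι i).hom_inv_id⟩
  · intro i h
    show (ι i).inv ≫ d.mor i = e.mor i ≫ (ι (i+1)).inv
    rw [Iso.inv_comp_eq, ← Category.assoc, hcomm i h, Category.assoc,
      Iso.hom_inv_id, Category.comp_id]
  · show (ι (n-1)).inv ≫ d.phantom = e.phantom ≫ S.map ((ι 0).inv)
    rw [Iso.inv_comp_eq, ← Category.assoc, hph, Category.assoc,
      ← S.map_comp, Iso.hom_inv_id, S.map_id, Category.comp_id]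

lemma trivial_obj_zero (A₀ : T) : (trivialNSeq (S := S) (n := n) A₀).obj 0 = A₀ := rfl
lemma trivial_obj_one (A₀ : T) : (trivialNSeq (S := S) (n := n) A₀).obj 1 = A₀ := rfl
lemma trivial_obj_ge {A₀ : T} {i : ℕ} (h : 2 ≤ i) :
    (trivialNSeq (S := S) (n := n) A₀).obj i = 0 := by
  obtain ⟨m, rfl⟩ : ∃ m, i = m + 2 := ⟨i - 2, by omega⟩
  rfl
lemma trivial_mor_zero (A₀ : T) : (trivialNSeq (S := S) (n := n) A₀).mor 0 = 𝟙 A₀ := rfl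
lemma trivial_mor_ge {A₀ : T} {i : ℕ} (h : 1 ≤ i) :
    (trivialNSeq (S := S) (n := n) A₀).mor i = 0 := by
  obtain ⟨m, rfl⟩ : ∃ m, i = m + 1 := ⟨i - 1, by omega⟩
  rfl
lemma trivial_phantom (A₀ : T) : (trivialNSeq (S := S) (n := n) A₀).phantom = 0 := rfl

end Aux2

section Aux3

open CategoryTheory CategoryTheory.Limits ZeroObject
set_option linter.unusedSectionVars false
set_option linter.unusedVariables false
set_option maxHeartbeats 1600000

variable {n : ℕ} {T : Type u} [Category.{v} T] [Preadditive T] [HasZeroObject T]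
  [HasBinaryBiproducts T] {S : T ⥤ T}

lemma NSeq.morCongr (d : NSeq n T S) {j j' : ℕ} (h : j = j') :
    d.mor j = eqToHom (congrArg d.obj h) ≫ d.mor j' ≫
      eqToHom (congrArg d.obj (congrArg (· + 1) h)).symm := by
  subst h; simp

/-- variant of `mem_of_isos` where `d` has zero junk objects and the isomorphisms are
only given on the meaningful range. -/
lemma mem_of_isos' {Ang : Set (NSeq n T S)} (hAng : IsNAngulated Ang) (hn : 3 ≤ n)
    {d e : NSeq n T S} (he : e ∈ Ang) (hjunk : ∀ i, n ≤ i → d.obj i = (0 : T))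
    (ι : ∀ i, i ≤ n - 1 → (d.obj i ≅ e.obj i))
    (hcomm : ∀ (i) (h : i + 2 ≤ n),
      (ι i (by omega)).hom ≫ e.mor i = d.mor i ≫ (ι (i+1) (by omega)).hom)
    (hph : (ι (n-1) (by omega)).hom ≫ e.phantom = d.phantom ≫ S.map ((ι 0 (by omega)).hom)) :
    d ∈ Ang := by
  refine hAng.summand_mem d e he
    ⟨⟨fun i => if h : i ≤ n - 1 then (ι i h).hom else 0, ?_, ?_⟩,
     ⟨fun i => if h : i ≤ n - 1 then (ι i h).inv else 0, ?_, ?_⟩, ?_⟩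
  · intro i h
    rw [dif_pos (show i ≤ n - 1 by omega), dif_pos (show i + 1 ≤ n - 1 by omega)]
    exact hcomm i h
  · rw [dif_pos (show n - 1 ≤ n - 1 from le_rfl), dif_pos (show 0 ≤ n - 1 by omega)]
    exact hph
  · intro i h
    rw [dif_pos (show i ≤ n - 1 by omega), dif_pos (show i + 1 ≤ n - 1 by omega)]
    rw [Iso.inv_comp_eq, ← Category.assoc, hcomm i h, Category.assoc,
      Iso.hom_inv_id, Category.comp_id]
  · rw [dif_pos (show n - 1 ≤ n - 1 from le_rfl), dif_pos (show 0 ≤ n - 1 by omega)]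
    rw [Iso.inv_comp_eq, ← Category.assoc, hph, Category.assoc,
      ← S.map_comp, Iso.hom_inv_id, S.map_id, Category.comp_id]
  · intro i
    dsimp only
    by_cases h : i ≤ n - 1
    · rw [dif_pos h, dif_pos h, Iso.hom_inv_id]
    · rw [dif_neg h, dif_neg h, id_eq_zero_of_eq_zero (hjunk i (by omega))]
      simp

variable [S.IsEquivalence]

/-- De-rotate a morphism between `(n-1)`-fold rotations. -/
lemma descend (hn : 3 ≤ n) {x y : NSeq n T S}
    (ψ : NSeqHom (rotK hn (n-1) x) (rotK hn (n-1) y)) :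
    ∃ φ : NSeqHom x y,
      (φ.app (n-1) =
        eqToHom (rotKObj_lo' (by omega) (by omega) :
            rotKObj x (n-1) 0 = x.obj (n-1)).symm ≫
          ψ.app 0 ≫ eqToHom (rotKObj_lo' (by omega) (by omega) :
            rotKObj y (n-1) 0 = y.obj (n-1))) ∧
      (∀ (i) (h : i ≤ n - 2), S.map (φ.app i) =
        eqToHom (rotKObj_hi (by omega) (by omega) (by omega) i (by omega) :
            rotKObj x (n-1) (i+1) = S.obj (x.obj i)).symm ≫
          ψ.app (i+1) ≫
          eqToHom (rotKObj_hi (by omega) (by omega) (by omega) i (by omega) :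
            rotKObj y (n-1) (i+1) = S.obj (y.obj i))) := by
  set Φ : ∀ i, x.obj i ⟶ y.obj i := fun i =>
    if h : i ≤ n - 2 then
      S.preimage
        (eqToHom (rotKObj_hi (by omega) (by omega) (by omega) i (by omega) :
            rotKObj x (n-1) (i+1) = S.obj (x.obj i)).symm ≫
          ψ.app (i+1) ≫
          eqToHom (rotKObj_hi (by omega) (by omega) (by omega) i (by omega) :
            rotKObj y (n-1) (i+1) = S.obj (y.obj i)))
    else if h2 : i = n - 1 then
      eqToHom (congrArg x.obj h2) ≫
        eqToHom (rotKObj_lo' (by omega) (by omega) :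
          rotKObj x (n-1) 0 = x.obj (n-1)).symm ≫
        ψ.app 0 ≫
        eqToHom (rotKObj_lo' (by omega) (by omega) :
          rotKObj y (n-1) 0 = y.obj (n-1)) ≫
        eqToHom (congrArg y.obj h2).symm
    else 0 with hΦdef
  have hΦmap : ∀ (i) (h : i ≤ n - 2) (j) (hj : i + 1 = j), S.map (Φ i) =
      eqToHom (rotKObj_hi (by omega) (by omega) (by omega) i (by omega) :
          rotKObj x (n-1) j = S.obj (x.obj i)).symm ≫
        ψ.app j ≫
        eqToHom (rotKObj_hi (by omega) (by omega) (by omega) i (by omega) :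
          rotKObj y (n-1) j = S.obj (y.obj i)) := by
    intro i h j hj
    subst hj
    rw [hΦdef]
    dsimp only
    rw [dif_pos h, Functor.map_preimage]
  have hΦlast : ∀ (j) (hj : j = n - 1), Φ j =
      eqToHom (congrArg x.obj hj) ≫
      eqToHom (rotKObj_lo' (by omega) (by omega) :
          rotKObj x (n-1) 0 = x.obj (n-1)).symm ≫
        ψ.app 0 ≫ eqToHom (rotKObj_lo' (by omega) (by omega) :
          rotKObj y (n-1) 0 = y.obj (n-1)) ≫ eqToHom (congrArg y.obj hj).symm := by
    intro j hj
    subst hj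
    rw [hΦdef]
    dsimp only
    rw [dif_neg (by omega), dif_pos rfl]
  have hΦlast0 : Φ (n-1) =
      eqToHom (rotKObj_lo' (by omega) (by omega) :
          rotKObj x (n-1) 0 = x.obj (n-1)).symm ≫
        ψ.app 0 ≫ eqToHom (rotKObj_lo' (by omega) (by omega) :
          rotKObj y (n-1) 0 = y.obj (n-1)) := by
    rw [hΦlast (n-1) rfl]
    simp
  refine ⟨⟨Φ, ?_, ?_⟩, hΦlast0, fun i h => hΦmap i h (i+1) rfl⟩
  · -- comm
    intro i h
    apply S.map_injective
    rw [S.map_comp, S.map_comp]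
    by_cases h3 : i + 3 ≤ n
    · have hc := ψ.comm (i+1) (by omega)
      rw [rotK_mor_hi hn y (show i+1 ≤ n-2 by omega) (by omega)
            (show i+1+(n-1)-n = i by omega),
          rotK_mor_hi hn x (show i+1 ≤ n-2 by omega) (by omega)
            (show i+1+(n-1)-n = i by omega)] at hc
      simp only [Preadditive.comp_zsmul, Preadditive.zsmul_comp, Category.assoc] at hc
      have hc' := sign_cancel hc
      rw [hΦmap i (by omega) (i+1) rfl, hΦmap (i+1) (by omega) (i+2) rfl]
      have := congrArg (fun z =>
        eqToHom (rotKObj_hi (by omega) (by omega) (by omega) i (by omega) :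
            rotKObj x (n-1) (i+1) = S.obj (x.obj i)).symm ≫ z ≫
        eqToHom (rotKObj_hi (by omega) (by omega) (by omega) (i+1) (by omega) :
            rotKObj y (n-1) (i+2) = S.obj (y.obj (i+1)))) hc'
      simpa only [Category.assoc, eqToHom_trans, eqToHom_trans_assoc, eqToHom_refl,
        Category.id_comp, Category.comp_id] using this
    · have hi : i = n - 2 := by omega
      subst hi
      have hc := ψ.comm_phantom
      rw [rotK_phantom hn y (by omega) (by omega) (show n-1-1 = n-2 by omega),
          rotK_phantom hn x (by omega) (by omega) (show n-1-1 = n-2 by omega)] at hc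
      simp only [Preadditive.comp_zsmul, Preadditive.zsmul_comp, Category.assoc] at hc
      have hc' := sign_cancel hc
      rw [hΦmap (n-2) (by omega) (n-1) (by omega), hΦlast (n-2+1) (by omega)]
      rw [← cancel_epi (eqToHom
            (rotKObj_hi (by omega) (by omega) (by omega) (n-2) (by omega) :
              rotKObj x (n-1) (n-1) = S.obj (x.obj (n-2)))),
          ← cancel_mono (eqToHom (congrArg S.obj
            ((congrArg y.obj (show n-2+1 = n-1 by omega)).trans
              (rotKObj_lo' (by omega) (by omega) :
                rotKObj y (n-1) 0 = y.obj (n-1)).symm)))]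
      simp only [Category.assoc, eqToHom_trans, eqToHom_trans_assoc, eqToHom_refl,
        Category.id_comp, Category.comp_id, Functor.map_comp, eqToHom_map] at hc' ⊢
      exact hc'
  · -- comm_phantom
    have hc := ψ.comm 0 (by omega)
    rw [rotK_mor_mid hn y (show 0+(n-1) = n-1 by omega) (by omega),
        rotK_mor_mid hn x (show 0+(n-1) = n-1 by omega) (by omega)] at hc
    rw [hΦlast0, hΦmap 0 (by omega) (0+1) rfl]
    rw [← cancel_epi (eqToHom
          (rotKObj_lo' (by omega) (by omega) : rotKObj x (n-1) 0 = x.obj (n-1))),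
        ← cancel_mono (eqToHom
          ((rotKObj_hi (by omega) (by omega) (by omega) 0 (by omega) :
            rotKObj y (n-1) (0+1) = S.obj (y.obj 0)).symm))]
    simp only [Category.assoc, eqToHom_trans, eqToHom_trans_assoc, eqToHom_refl,
      Category.id_comp, Category.comp_id, Functor.map_comp, eqToHom_map] at hc ⊢
    exact hc

/-- Fill a morphism of `n`-angles prescribed at positions `n-1` and `n` (phantom level). -/
lemma connect {Ang : Set (NSeq n T S)} (hAng : IsNAngulated Ang) (hn : 3 ≤ n)
    {x y : NSeq n T S} (hx : x ∈ Ang) (hy : y ∈ Ang)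
    (f0 : x.obj (n-1) ⟶ y.obj (n-1)) (f1 : S.obj (x.obj 0) ⟶ S.obj (y.obj 0))
    (hsq : f0 ≫ y.phantom = x.phantom ≫ f1) :
    ∃ φ : NSeqHom x y, φ.app (n-1) = f0 ∧ S.map (φ.app 0) = f1 := by
  have hx' := (rotK_mem hAng hn x (n-1) (by omega) le_rfl).mp hx
  have hy' := (rotK_mem hAng hn y (n-1) (by omega) le_rfl).mp hy
  obtain ⟨ψ, hψ0, hψ1, -⟩ := hAng.fill _ _ hx' hy'
    (eqToHom (rotKObj_lo' (by omega) (by omega) : rotKObj x (n-1) 0 = x.obj (n-1)) ≫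
      f0 ≫ eqToHom (rotKObj_lo' (by omega) (by omega) :
        rotKObj y (n-1) 0 = y.obj (n-1)).symm)
    (eqToHom (rotKObj_hi (by omega) (by omega) (by omega) 0 (by omega) :
        rotKObj x (n-1) (0+1) = S.obj (x.obj 0)) ≫
      f1 ≫ eqToHom (rotKObj_hi (by omega) (by omega) (by omega) 0 (by omega) :
        rotKObj y (n-1) (0+1) = S.obj (y.obj 0)).symm)
    (by
      rw [show (rotK hn (n-1) y).mor 0 = _ from
            rotK_mor_mid hn y (show 0+(n-1) = n-1 by omega) (by omega),
          show (rotK hn (n-1) x).mor 0 = _ from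
            rotK_mor_mid hn x (show 0+(n-1) = n-1 by omega) (by omega)]
      simpa only [Category.assoc, eqToHom_trans, eqToHom_trans_assoc, eqToHom_refl,
        Category.id_comp, Category.comp_id] using congrArg (fun z =>
          eqToHom (rotKObj_lo' (by omega) (by omega) :
            rotKObj x (n-1) 0 = x.obj (n-1)) ≫ z ≫
          eqToHom ((rotKObj_hi (by omega) (by omega) (by omega) 0 (by omega) :
            rotKObj y (n-1) (0+1) = S.obj (y.obj 0)).symm)) hsq)
  obtain ⟨φ, hφlast, hφmap⟩ := descend hn ψ
  refine ⟨φ, ?_, ?_⟩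
  · rw [hφlast, hψ0]
    simp [eqToHom_trans, eqToHom_trans_assoc]
  · rw [hφmap 0 (by omega), hψ1]
    simp [eqToHom_trans, eqToHom_trans_assoc]

end Aux3

section Aux4

open CategoryTheory CategoryTheory.Limits ZeroObject
set_option linter.unusedSectionVars false
set_option linter.unusedVariables false
set_option maxHeartbeats 3200000

variable {n : ℕ} {T : Type u} [Category.{v} T] [Preadditive T] [HasZeroObject T]
  [HasBinaryBiproducts T] {S : T ⥤ T} [S.IsEquivalence]

/-- The counit isomorphism of the equivalence `S`. -/
noncomputable def cou (Y : T) : S.obj (S.inv.obj Y) ≅ Y :=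
  S.asEquivalence.counitIso.app Y

/-- Realization: any morphism `X ⟶ S.obj B` is the phantom of some `n`-angle. -/
lemma realize {Ang : Set (NSeq n T S)} (hAng : IsNAngulated Ang) (hn : 3 ≤ n)
    {X B : T} (p : X ⟶ S.obj B) :
    ∃ e : NSeq n T S, e ∈ Ang ∧ ∃ (h0 : e.obj 0 = B) (h1 : e.obj (n-1) = X),
      e.phantom = eqToHom h1 ≫ p ≫ eqToHom (congrArg S.obj h0).symm := by
  obtain ⟨c, hc, h0, h1, hcm⟩ := hAng.complete p
  set eO : ℕ → T := fun i =>
    if i = 0 then B else if i ≤ n - 2 then S.inv.obj (c.obj (i+1))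
    else if i = n - 1 then X else 0 with heOdef
  have heO0 : eO 0 = B := by simp [heOdef]
  have heOmid : ∀ i, 1 ≤ i → i ≤ n - 2 → eO i = S.inv.obj (c.obj (i+1)) := by
    intro i ha hb; rw [heOdef]; dsimp only; rw [if_neg (by omega), if_pos hb]
  have heOlast : eO (n-1) = X := by
    rw [heOdef]; dsimp only; rw [if_neg (by omega), if_neg (by omega), if_pos rfl]
  set core0 : B ⟶ S.inv.obj (c.obj 2) :=
    S.preimage (((-1:ℤ)^n) • (eqToHom h1.symm ≫ c.mor 1 ≫ (cou (c.obj 2)).inv))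
    with hcore0
  set coreMid : ∀ j : ℕ, (S.inv.obj (c.obj (j+1)) ⟶ S.inv.obj (c.obj (j+1+1))) := fun j =>
    S.preimage (((-1:ℤ)^n) •
      ((cou (c.obj (j+1))).hom ≫ c.mor (j+1) ≫ (cou (c.obj (j+1+1))).inv)) with hcoreMid
  set coreLast : S.inv.obj (c.obj (n-1)) ⟶ X :=
    S.preimage (((-1:ℤ)^n) •
      ((cou (c.obj (n-1))).hom ≫ c.phantom ≫ eqToHom (congrArg S.obj h0))) with hcoreLast
  set eM : ∀ i, eO i ⟶ eO (i+1) := fun i =>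
    if hi0 : i = 0 then
      eqToHom ((congrArg eO hi0).trans heO0) ≫ core0 ≫
        eqToHom (((congrArg eO (congrArg (· + 1) hi0)).trans
          (heOmid 1 le_rfl (by omega))).symm)
    else if him : i + 1 ≤ n - 2 then
      eqToHom (heOmid i (by omega) (by omega)) ≫ coreMid i ≫
        eqToHom ((heOmid (i+1) (by omega) him).symm)
    else if hil : i = n - 2 then
      eqToHom ((congrArg eO hil).trans ((heOmid (n-2) (by omega) le_rfl).trans
        (congrArg S.inv.obj (congrArg c.obj (show n-2+1 = n-1 by omega))))) ≫ coreLast ≫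
        eqToHom (((congrArg eO (show i+1 = n-1 by omega)).trans heOlast).symm)
    else 0 with heMdef
  have hem0 : eM 0 = eqToHom heO0 ≫ core0 ≫
      eqToHom ((heOmid 1 le_rfl (by omega)).symm) := by
    rw [heMdef]; dsimp only; rw [dif_pos rfl]
  have hemMid : ∀ j (hj1 : 1 ≤ j) (hj2 : j + 1 ≤ n - 2),
      eM j = eqToHom (heOmid j (by omega) (by omega)) ≫ coreMid j ≫
        eqToHom ((heOmid (j+1) (by omega) (by omega)).symm) := by
    intro j hj1 hj2; rw [heMdef]; dsimp only; rw [dif_neg (by omega), dif_pos hj2]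
  have hemLast : eM (n-2) = eqToHom ((heOmid (n-2) (by omega) le_rfl).trans
      (congrArg S.inv.obj (congrArg c.obj (show n-2+1 = n-1 by omega)))) ≫ coreLast ≫
      eqToHom (((congrArg eO (show n-2+1 = n-1 by omega)).trans heOlast).symm) := by
    rw [heMdef]; dsimp only; rw [dif_neg (by omega), dif_neg (by omega), dif_pos rfl]
  set ePh : eO (n-1) ⟶ S.obj (eO 0) :=
    eqToHom heOlast ≫ p ≫ eqToHom ((congrArg S.obj heO0).symm) with hePh
  set e : NSeq n T S := ⟨eO, eM, ePh⟩ with hedef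
  set R := rotK hn (n-1) e with hRdef
  have hR0 : R.obj 0 = c.obj 0 :=
    ((rotKObj_lo' (by omega) (by omega) : rotKObj e (n-1) 0 = e.obj (n-1)).trans
      heOlast).trans h0.symm
  have hR1 : R.obj 1 = c.obj 1 :=
    ((rotKObj_hi (by omega) (by omega) (by omega) 0 (by omega) :
        rotKObj e (n-1) 1 = S.obj (e.obj 0)).trans
      (congrArg S.obj heO0)).trans h1.symm
  have hRS : ∀ i, 2 ≤ i → i ≤ n - 1 → R.obj i = S.obj (S.inv.obj (c.obj i)) := by
    intro i h2 h3
    obtain ⟨m, rfl⟩ : ∃ m, i = m + 1 := ⟨i - 1, by omega⟩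
    exact (rotKObj_hi (by omega) (by omega) (by omega) m (by omega) :
      rotKObj e (n-1) (m+1) = S.obj (e.obj m)).trans
      (congrArg S.obj (heOmid m (by omega) (by omega)))
  have hRmor0 : R.mor 0 = eqToHom hR0 ≫ c.mor 0 ≫ eqToHom hR1.symm := by
    rw [show R.mor 0 = _ from rotK_mor_mid hn e (show 0+(n-1) = n-1 by omega) (by omega),
      hcm, show e.phantom = ePh from rfl, hePh]
    simp only [Category.assoc, eqToHom_trans, eqToHom_trans_assoc, eqToHom_refl,
      Category.id_comp, Category.comp_id]
  have hRmor1 : R.mor 1 = eqToHom hR1 ≫ c.mor 1 ≫ (cou (c.obj 2)).inv ≫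
      eqToHom (hRS 2 le_rfl (by omega)).symm := by
    rw [show R.mor 1 = _ from
        rotK_mor_hi hn e (by omega) (by omega) (show 1+(n-1)-n = 0 by omega),
      show e.mor 0 = eM 0 from rfl, hem0, hcore0]
    simp only [Functor.map_comp, eqToHom_map, Functor.map_preimage,
      Preadditive.comp_zsmul, Preadditive.zsmul_comp, smul_smul,
      neg_one_pow_mul_self_eq_one, one_smul, Category.assoc, eqToHom_trans,
      eqToHom_trans_assoc, eqToHom_refl, Category.id_comp, Category.comp_id]
  have hRmorMid : ∀ i (h2 : 2 ≤ i) (h3 : i ≤ n - 2),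
      R.mor i = eqToHom (hRS i (by omega) (by omega)) ≫ (cou (c.obj i)).hom ≫
        c.mor i ≫ (cou (c.obj (i+1))).inv ≫ eqToHom (hRS (i+1) (by omega) (by omega)).symm := by
    intro i h2 h3
    obtain ⟨m, rfl⟩ : ∃ m, i = m + 1 := ⟨i - 1, by omega⟩
    rw [show R.mor (m+1) = _ from
        rotK_mor_hi hn e (by omega) (by omega) (show m+1+(n-1)-n = m by omega),
      show e.mor m = eM m from rfl, hemMid m (by omega) (by omega), hcoreMid]
    dsimp only
    simp only [Functor.map_comp, eqToHom_map, Functor.map_preimage,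
      Preadditive.comp_zsmul, Preadditive.zsmul_comp, smul_smul,
      neg_one_pow_mul_self_eq_one, one_smul, Category.assoc, eqToHom_trans,
      eqToHom_trans_assoc, eqToHom_refl, Category.id_comp, Category.comp_id]
  have hRph : R.phantom = eqToHom (hRS (n-1) (by omega) le_rfl) ≫
      (cou (c.obj (n-1))).hom ≫ c.phantom ≫
      eqToHom (congrArg S.obj hR0.symm) := by
    rw [show R.phantom = _ from rotK_phantom hn e (by omega) (by omega)
        (show n-1-1 = n-2 by omega),
      show e.mor (n-2) = eM (n-2) from rfl, hemLast, hcoreLast]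
    simp only [Functor.map_comp, eqToHom_map, Functor.map_preimage,
      Preadditive.comp_zsmul, Preadditive.zsmul_comp, smul_smul,
      neg_one_pow_mul_self_eq_one, one_smul, Category.assoc, eqToHom_trans,
      eqToHom_trans_assoc, eqToHom_refl, Category.id_comp, Category.comp_id]
  have hRAng : R ∈ Ang := by
    refine mem_of_isos' hAng hn hc (fun i hi => rotKObj_junk (by omega) (by omega))
      (fun i hi =>
        if hi0 : i = 0 then
          eqToIso (((congrArg R.obj hi0).trans hR0).trans (congrArg c.obj hi0.symm))
        else if hi1 : i = 1 then
          eqToIso (((congrArg R.obj hi1).trans hR1).trans (congrArg c.obj hi1.symm))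
        else eqToIso (hRS i (by omega) hi) ≪≫ cou (c.obj i)) ?_ ?_
    · intro i h
      by_cases hi0 : i = 0
      · subst hi0
        rw [dif_pos rfl, dif_neg (by omega), dif_pos rfl, hRmor0]
        by_cases h1' : (1:ℕ) = 1
        · simp [eqToHom_trans, eqToHom_trans_assoc]
        · omega
      · by_cases hi1 : i = 1
        · subst hi1
          rw [dif_neg (by omega), dif_pos rfl, dif_neg (by omega), dif_neg (by omega),
            hRmor1]
          simp [eqToHom_trans, eqToHom_trans_assoc]
        · rw [dif_neg hi0, dif_neg hi1, dif_neg (by omega), dif_neg (by omega),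
            hRmorMid i (by omega) (by omega)]
          simp [eqToHom_trans, eqToHom_trans_assoc]
    · rw [dif_neg (by omega), dif_neg (by omega), dif_pos rfl, hRph]
      simp [eqToHom_trans, eqToHom_trans_assoc, eqToHom_map]
  refine ⟨e, (rotK_mem hAng hn e (n-1) (by omega) le_rfl).mpr hRAng, heO0, heOlast, ?_⟩
  rw [show e.phantom = ePh from rfl, hePh]

end Aux4

section Aux5

open CategoryTheory CategoryTheory.Limits ZeroObject
set_option linter.unusedSectionVars false
set_option linter.unusedVariables false
set_option maxHeartbeats 1600000

variable {n : ℕ} {T : Type u} [Category.{v} T] [Preadditive T] [HasZeroObject T]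
  [HasBinaryBiproducts T] {S : T ⥤ T} [S.IsEquivalence]
variable {Ang : Set (NSeq n T S)} {A : Set T} {E : Set (NSeq n T S)}

/-- Base change of an `n`-angle in `E` along a morphism into its `(n-1)`-st object. -/
lemma baseChangeE (hAng : IsNAngulated Ang) (hn : 3 ≤ n)
    (hA : ClosedUnderExtensions Ang A) (hE : IsAlmostNExact Ang A E)
    {d : NSeq n T S} (hd : d ∈ E) {V : T} (hV : V ∈ A) (u : V ⟶ d.obj (n-1)) :
    ∃ e ∈ E, ∃ (h0 : e.obj 0 = d.obj 0) (h1 : e.obj (n-1) = V),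
      e.phantom = eqToHom h1 ≫ u ≫ d.phantom ≫ eqToHom (congrArg S.obj h0).symm := by
  obtain ⟨e, heAng, h0, h1, hph⟩ := realize hAng hn (u ≫ d.phantom)
  have hdAng := (hE.subset_DA hd).1
  have hdObj := (hE.subset_DA hd).2
  obtain ⟨φ, hφlast, hφ0⟩ := connect hAng hn heAng hdAng
    (eqToHom h1 ≫ u) (eqToHom (congrArg S.obj h0))
    (by rw [hph]
        simp only [Category.assoc, eqToHom_trans, eqToHom_trans_assoc, eqToHom_refl,
          Category.id_comp, Category.comp_id])
  have hφ0' : φ.app 0 = eqToHom h0 := by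
    apply S.map_injective
    rw [hφ0, eqToHom_map]
  have heDA : e ∈ DA Ang A :=
    ⟨heAng, hA e heAng (by rw [h0]; exact hdObj 0 (by omega)) (by rw [h1]; exact hV)⟩
  exact ⟨e, hE.base_change d hd e heDA φ h0 hφ0', h0, h1, by
    rw [hph]
    simp only [Category.assoc, eqToHom_trans, eqToHom_trans_assoc, eqToHom_refl,
      Category.id_comp, Category.comp_id]⟩

/-- Cobase change of an `n`-angle in `E` along a morphism out of its `0`-th object. -/
lemma cobaseChangeE (hAng : IsNAngulated Ang) (hn : 3 ≤ n)
    (hA : ClosedUnderExtensions Ang A) (hE : IsAlmostNExact Ang A E)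
    {d : NSeq n T S} (hd : d ∈ E) {C : T} (hC : C ∈ A) (g : d.obj 0 ⟶ C) :
    ∃ e ∈ E, ∃ (h0 : e.obj 0 = C) (h1 : e.obj (n-1) = d.obj (n-1)),
      e.phantom = eqToHom h1 ≫ d.phantom ≫ S.map g ≫ eqToHom (congrArg S.obj h0).symm := by
  obtain ⟨e, heAng, h0, h1, hph⟩ := realize hAng hn (d.phantom ≫ S.map g)
  have hdAng := (hE.subset_DA hd).1
  have hdObj := (hE.subset_DA hd).2
  obtain ⟨φ, hφlast, hφ0⟩ := connect hAng hn hdAng heAng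
    (eqToHom h1.symm) (S.map g ≫ eqToHom (congrArg S.obj h0).symm)
    (by rw [hph]
        simp only [Category.assoc, eqToHom_trans, eqToHom_trans_assoc, eqToHom_refl,
          Category.id_comp, Category.comp_id])
  have heDA : e ∈ DA Ang A :=
    ⟨heAng, hA e heAng (by rw [h0]; exact hC)
      (by rw [h1]; exact hdObj (n-1) (by omega))⟩
  exact ⟨e, hE.cobase_change d hd e heDA φ h1.symm hφlast, h0, h1, by
    rw [hph]
    simp only [Category.assoc, eqToHom_trans, eqToHom_trans_assoc, eqToHom_refl,
      Category.id_comp, Category.comp_id]⟩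

/-- `Φ(E)` is stable under `eqToHom` conjugation. -/
lemma phant_conj {X X' Y Y' : T} (hX : X = X') (hY : Y = Y') {f : X ⟶ Y}
    (hf : phant E f) : phant E (eqToHom hX.symm ≫ f ≫ eqToHom hY) := by
  obtain ⟨d, hd, hXd, hYd, hfe⟩ := hf
  exact ⟨d, hd, hXd.trans hX, hYd.trans hY, by
    rw [hfe]
    simp only [Category.assoc, eqToHom_trans, eqToHom_trans_assoc, eqToHom_refl,
      Category.id_comp, Category.comp_id]⟩

/-- `Φ(E)` is stable under precomposition with morphisms of `A`. -/
lemma phant_precomp (hAng : IsNAngulated Ang) (hn : 3 ≤ n)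
    (hA : ClosedUnderExtensions Ang A) (hE : IsAlmostNExact Ang A E)
    {Z Y : T} {f : Z ⟶ Y} (hf : phant E f) {X : T} (hX : X ∈ A) (u : X ⟶ Z) :
    phant E (u ≫ f) := by
  obtain ⟨d, hd, hXd, hYd, hfe⟩ := hf
  obtain ⟨e, heE, h0, h1, hph⟩ := baseChangeE hAng hn hA hE hd hX (u ≫ eqToHom hXd.symm)
  refine ⟨e, heE, h1, (congrArg S.obj h0).trans hYd, ?_⟩
  rw [hfe, hph]
  simp only [Category.assoc, eqToHom_trans, eqToHom_trans_assoc, eqToHom_refl,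
    Category.id_comp, Category.comp_id]

end Aux5

section Aux6

open CategoryTheory CategoryTheory.Limits ZeroObject
set_option linter.unusedSectionVars false
set_option linter.unusedVariables false
set_option maxHeartbeats 1600000

variable {n : ℕ} {T : Type u} [Category.{v} T] [Preadditive T] [HasZeroObject T]
  [HasBinaryBiproducts T] {S : T ⥤ T} [S.IsEquivalence]
variable {Ang : Set (NSeq n T S)}

/-- A morphism killed by the phantom factors through the `(n-2)`-nd morphism. -/
lemma factor_last (hAng : IsNAngulated Ang) (hn : 3 ≤ n)
    {d : NSeq n T S} (hd : d ∈ Ang) {X : T} (f : X ⟶ d.obj (n-1))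
    (hf : f ≫ d.phantom = 0) :
    ∃ g : X ⟶ d.obj (n-2),
      g ≫ d.mor (n-2) ≫ eqToHom (congrArg d.obj (show n-2+1 = n-1 by omega)) = f := by
  set t := trivialNSeq (n := n) (S := S) X with htdef
  have htAng : t ∈ Ang := hAng.trivial_mem X
  have ht1 : rotK hn 1 t ∈ Ang := (rotK_mem hAng hn t 1 le_rfl (by omega)).mp htAng
  have hD : rotK hn (n-1) d ∈ Ang := (rotK_mem hAng hn d (n-1) (by omega) le_rfl).mp hd
  have hid : t.mor 0 = eqToHom ((trivial_obj_zero X).trans (trivial_obj_one X).symm) := by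
    rw [trivial_mor_zero]
    exact rfl
  have ht1o0 : (rotK hn 1 t).obj 0 = X :=
    (rotKObj_lo' (by omega) (show 0+1 = 1 by omega) : rotKObj t 1 0 = t.obj 1).trans
      (trivial_obj_one X)
  have ht1last : (rotK hn 1 t).obj (n-1) = S.obj X :=
    (rotKObj_hi (by omega) (by omega) (by omega) 0 (by omega) :
      rotKObj t 1 (n-1) = S.obj (t.obj 0)).trans (congrArg S.obj (trivial_obj_zero X))
  have hD0 : (rotK hn (n-1) d).obj 0 = d.obj (n-1) :=
    rotKObj_lo' (by omega) (by omega)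
  have hDlast : (rotK hn (n-1) d).obj (n-1) = S.obj (d.obj (n-2)) :=
    rotKObj_hi (by omega) (by omega) (by omega) (n-2) (by omega)
  obtain ⟨ψ, hψ0, hψ1, -⟩ := hAng.fill (rotK hn 1 t) (rotK hn (n-1) d) ht1 hD
    (eqToHom ht1o0 ≫ f ≫ eqToHom hD0.symm) 0
    (by
      rw [show (rotK hn (n-1) d).mor 0 = _ from
          rotK_mor_mid hn d (show 0+(n-1) = n-1 by omega) (by omega)]
      have hf' := reassoc_of% hf
      simp only [Category.assoc, eqToHom_trans_assoc, eqToHom_refl, Category.id_comp,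
        comp_zero, zero_comp, hf'])
  have hcp := ψ.comm_phantom
  rw [rotK_phantom hn d (by omega) (by omega) (show n-1-1 = n-2 by omega),
    rotK_phantom hn t (by omega) (by omega) (show 1-1 = 0 from rfl),
    hψ0, hid] at hcp
  simp only [CategoryTheory.Functor.map_id, Functor.map_comp, eqToHom_map, Preadditive.comp_zsmul,
    Preadditive.zsmul_comp, Category.assoc, Category.id_comp, Category.comp_id,
    eqToHom_trans, eqToHom_trans_assoc, eqToHom_refl] at hcp
  have hcp' := sign_cancel hcp
  refine ⟨S.preimage (eqToHom ht1last.symm ≫ ψ.app (n-1) ≫ eqToHom hDlast), ?_⟩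
  apply S.map_injective
  rw [S.map_comp, S.map_comp, Functor.map_preimage, eqToHom_map]
  rw [← cancel_epi (eqToHom ht1last), ← cancel_mono (eqToHom (congrArg S.obj hD0).symm)]
  simp only [Category.assoc, eqToHom_trans, eqToHom_trans_assoc, eqToHom_refl,
    Category.id_comp, Category.comp_id, CategoryTheory.Functor.map_id] at hcp' ⊢
  exact hcp'

/-- A morphism killed by the phantom (on the other side) extends along the first morphism. -/
lemma factor_first (hAng : IsNAngulated Ang) (hn : 3 ≤ n)
    {d : NSeq n T S} (hd : d ∈ Ang) {Y : T} (g : d.obj 0 ⟶ Y)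
    (hg : d.phantom ≫ S.map g = 0) :
    ∃ g' : d.obj 1 ⟶ Y, d.mor 0 ≫ g' = g := by
  set t := trivialNSeq (n := n) (S := S) Y with htdef
  have htAng : t ∈ Ang := hAng.trivial_mem Y
  have hu : rotK hn (n-1) t ∈ Ang := (rotK_mem hAng hn t (n-1) (by omega) le_rfl).mp htAng
  have hD : rotK hn (n-1) d ∈ Ang := (rotK_mem hAng hn d (n-1) (by omega) le_rfl).mp hd
  have hid : t.mor 0 = eqToHom ((trivial_obj_zero Y).trans (trivial_obj_one Y).symm) := by
    rw [trivial_mor_zero]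
    exact rfl
  have hu1 : (rotK hn (n-1) t).obj 1 = S.obj Y :=
    (rotKObj_hi (by omega) (by omega) (by omega) 0 (by omega) :
      rotKObj t (n-1) 1 = S.obj (t.obj 0)).trans (congrArg S.obj (trivial_obj_zero Y))
  have hu2 : (rotK hn (n-1) t).obj 2 = S.obj Y :=
    (rotKObj_hi (by omega) (by omega) (by omega) 1 (by omega) :
      rotKObj t (n-1) 2 = S.obj (t.obj 1)).trans (congrArg S.obj (trivial_obj_one Y))
  have hD1 : (rotK hn (n-1) d).obj 1 = S.obj (d.obj 0) :=
    rotKObj_hi (by omega) (by omega) (by omega) 0 (by omega)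
  have hD2 : (rotK hn (n-1) d).obj 2 = S.obj (d.obj 1) :=
    rotKObj_hi (by omega) (by omega) (by omega) 1 (by omega)
  obtain ⟨ψ, hψ0, hψ1, -⟩ := hAng.fill (rotK hn (n-1) d) (rotK hn (n-1) t) hD hu
    0 (eqToHom hD1 ≫ S.map g ≫ eqToHom hu1.symm)
    (by
      rw [show (rotK hn (n-1) d).mor 0 = _ from
          rotK_mor_mid hn d (show 0+(n-1) = n-1 by omega) (by omega)]
      have hg' := reassoc_of% hg
      simp only [Category.assoc, eqToHom_trans_assoc, eqToHom_refl, Category.id_comp,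
        comp_zero, zero_comp, hg'])
  have hcm := ψ.comm 1 (by omega)
  rw [rotK_mor_hi hn t (by omega) (by omega) (show 1+(n-1)-n = 0 by omega),
    rotK_mor_hi hn d (by omega) (by omega) (show 1+(n-1)-n = 0 by omega),
    hψ1, hid] at hcm
  simp only [CategoryTheory.Functor.map_id, Functor.map_comp, eqToHom_map, Preadditive.comp_zsmul,
    Preadditive.zsmul_comp, Category.assoc, Category.id_comp, Category.comp_id,
    eqToHom_trans, eqToHom_trans_assoc, eqToHom_refl] at hcm
  have hcm' := sign_cancel hcm
  refine ⟨S.preimage (eqToHom hD2.symm ≫ ψ.app 2 ≫ eqToHom hu2), ?_⟩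
  apply S.map_injective
  rw [S.map_comp, Functor.map_preimage]
  rw [← cancel_epi (eqToHom hD1), ← cancel_mono (eqToHom hu2.symm)]
  simp only [Category.assoc, eqToHom_trans, eqToHom_trans_assoc, eqToHom_refl,
    Category.id_comp, Category.comp_id, CategoryTheory.Functor.map_id] at hcm' ⊢
  exact hcm'.symm

end Aux6

section Aux7

open CategoryTheory CategoryTheory.Limits ZeroObject
set_option linter.unusedSectionVars false
set_option linter.unusedVariables false
set_option maxHeartbeats 1600000

variable {n : ℕ} {T : Type u} [Category.{v} T] [Preadditive T] [HasZeroObject T]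
  [HasBinaryBiproducts T] {S : T ⥤ T}
variable {Ang : Set (NSeq n T S)}

lemma isZero_S_zero [S.IsEquivalence] : IsZero (S.obj (0 : T)) :=
  S.map_isZero (isZero_zero T)

/-- The sequence `0 → ⋯ → 0 → Z = Z` concentrated in the last two slots. -/
noncomputable def tailObj (Z : T) (i : ℕ) : T :=
  if n - 2 ≤ i ∧ i ≤ n - 1 then Z else 0

lemma tailObj_in {Z : T} {i : ℕ} (h1 : n - 2 ≤ i) (h2 : i ≤ n - 1) :
    tailObj (n := n) Z i = Z := if_pos ⟨h1, h2⟩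

lemma tailObj_out {Z : T} {i : ℕ} (h : i < n - 2 ∨ n - 1 < i) :
    tailObj (n := n) Z i = 0 := if_neg (by omega)

@[reducible] noncomputable def tailSeq (hn : 3 ≤ n) (Z : T) : NSeq n T S where
  obj := tailObj Z
  mor i := if h : i = n - 2 then
      eqToHom (tailObj_in (by omega) (by omega)) ≫
        eqToHom (tailObj_in (show n-2 ≤ i+1 by omega) (by omega)).symm
    else 0
  phantom := 0

lemma tailSeq_mor_last (hn : 3 ≤ n) (Z : T) :
    (tailSeq (S := S) hn Z).mor (n-2) =
      eqToHom (tailObj_in (by omega) (by omega)) ≫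
        eqToHom (tailObj_in (show n-2 ≤ n-2+1 by omega) (by omega)).symm := by
  exact dif_pos rfl

lemma tailSeq_mem [S.IsEquivalence] (hAng : IsNAngulated Ang) (hn : 3 ≤ n) (Z : T) :
    tailSeq (S := S) hn Z ∈ Ang := by
  refine (rotK_mem hAng hn _ (n-2) (by omega) (by omega)).mpr ?_
  have hZrot0 : (rotK hn (n-2) (tailSeq (S := S) hn Z)).obj 0 = Z :=
    (rotKObj_lo' (by omega) (show 0+(n-2) = n-2 by omega)).trans
      (tailObj_in le_rfl (by omega))
  have hZrot1 : (rotK hn (n-2) (tailSeq (S := S) hn Z)).obj 1 = Z :=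
    (rotKObj_lo' (by omega) (show 1+(n-2) = n-1 by omega)).trans
      (tailObj_in (by omega) le_rfl)
  have hZrotHi : ∀ i, 2 ≤ i → i ≤ n - 1 →
      (rotK hn (n-2) (tailSeq (S := S) hn Z)).obj i = S.obj ((tailSeq (S := S) hn Z).obj (i-2)) := by
    intro i h2 h3
    exact rotKObj_hi (by omega) (by omega) (by omega) (i-2) (by omega)
  have hZrotZero : ∀ i, 2 ≤ i → i ≤ n - 1 →
      IsZero ((rotK hn (n-2) (tailSeq (S := S) hn Z)).obj i) := by
    intro i h2 h3
    rw [hZrotHi i h2 h3,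
      show (tailSeq (S := S) hn Z).obj (i-2) = (0:T) from tailObj_out (by omega)]
    exact isZero_S_zero
  have htrivZero : ∀ i, 2 ≤ i → IsZero ((trivialNSeq (S := S) (n := n) Z).obj i) := by
    intro i h2
    rw [trivial_obj_ge h2]
    exact isZero_zero T
  have hid : (trivialNSeq (S := S) (n := n) Z).mor 0 =
      eqToHom ((trivial_obj_zero Z).trans (trivial_obj_one Z).symm) := by
    rw [trivial_mor_zero]
    exact rfl
  refine mem_of_isos' hAng hn (hAng.trivial_mem Z)
    (fun i hi => rotKObj_junk (by omega) (by omega))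
    (fun i hi =>
      if h0 : i = 0 then
        eqToIso (((congrArg _ h0).trans hZrot0).trans
          ((trivial_obj_zero Z).symm.trans (congrArg _ h0.symm)))
      else if h1 : i = 1 then
        eqToIso (((congrArg _ h1).trans hZrot1).trans
          ((trivial_obj_one Z).symm.trans (congrArg _ h1.symm)))
      else (hZrotZero i (by omega) hi).iso (htrivZero i (by omega))) ?_ ?_
  · intro i h
    by_cases h0 : i = 0
    · subst h0
      beta_reduce
      rw [dif_pos rfl, dif_neg (by omega), dif_pos rfl, hid,
        show (rotK hn (n-2) (tailSeq (S := S) hn Z)).mor 0 = _ from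
          rotK_mor_lo hn _ (by omega) (show 0+(n-2) = n-2 by omega),
        tailSeq_mor_last hn Z]
      simp [eqToHom_trans, eqToHom_trans_assoc]
    · exact (htrivZero (i+1) (by omega)).eq_of_tgt _ _
  · exact (hZrotZero (n-1) (by omega) le_rfl).eq_of_src _ _

/-- image of an `n`-angle under a family of isomorphisms. -/
noncomputable def isoImage (e : NSeq n T S) (O : ℕ → T) (ι : ∀ i, O i ≅ e.obj i) :
    NSeq n T S where
  obj := O
  mor i := (ι i).hom ≫ e.mor i ≫ (ι (i+1)).inv
  phantom := (ι (n-1)).hom ≫ e.phantom ≫ S.map ((ι 0).inv)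

lemma isoImage_mem (hAng : IsNAngulated Ang) {e : NSeq n T S} {O : ℕ → T}
    {ι : ∀ i, O i ≅ e.obj i} (he : e ∈ Ang) : isoImage e O ι ∈ Ang := by
  refine mem_of_isos hAng he ι ?_ ?_
  · intro i h
    show (ι i).hom ≫ e.mor i =
      ((ι i).hom ≫ e.mor i ≫ (ι (i+1)).inv) ≫ (ι (i+1)).hom
    simp
  · show (ι (n-1)).hom ≫ e.phantom =
      ((ι (n-1)).hom ≫ e.phantom ≫ S.map ((ι 0).inv)) ≫ S.map ((ι 0).hom)
    rw [Category.assoc, Category.assoc, ← S.map_comp, Iso.inv_hom_id, S.map_id,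
      Category.comp_id]

noncomputable def isoBiprodZeroRight {Z N : T} (hN : IsZero N) : Z ≅ Z ⊞ N where
  hom := biprod.lift (𝟙 Z) 0
  inv := biprod.fst
  hom_inv_id := by simp
  inv_hom_id := by
    apply biprod.hom_ext
    · simp
    · exact hN.eq_of_tgt _ _
noncomputable def isoBiprodZeroLeft {Z N : T} (hN : IsZero N) : Z ≅ N ⊞ Z where
  hom := biprod.lift 0 (𝟙 Z)
  inv := biprod.snd
  hom_inv_id := by simp
  inv_hom_id := by
    apply biprod.hom_ext
    · exact hN.eq_of_tgt _ _
    · simp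

/-- Key consequence of extension-closure: every `Z ∈ A` admits a retract `S.obj W ∈ A`. -/
lemma retract_exists [S.IsEquivalence] (hAng : IsNAngulated Ang) (hn : 3 ≤ n)
    {A : Set T} (hA : ClosedUnderExtensions Ang A) {Z : T} (hZ : Z ∈ A) :
    ∃ (W : T), S.obj W ∈ A ∧ ∃ (u : S.obj W ⟶ Z) (s : Z ⟶ S.obj W), s ≫ u = 𝟙 Z := by
  set t := trivialNSeq (S := S) (n := n) Z with htdef
  set w := tailSeq (S := S) hn Z with hwdef
  set big := biprodSeq t w with hbigdef
  have hbigAng : big ∈ Ang :=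
    hAng.biprod_mem _ _ (hAng.trivial_mem Z) (tailSeq_mem hAng hn Z)
  set W := S.inv.obj (big.obj 1) with hWdef
  have hNw0 : IsZero (w.obj 0) := by
    rw [show w.obj 0 = (0:T) from tailObj_out (by omega)]
    exact isZero_zero T
  have hNtl : IsZero (t.obj (n-1)) := by
    rw [trivial_obj_ge (by omega)]
    exact isZero_zero T
  set vO : ℕ → T := fun i =>
    if i = 0 then Z else if i = 1 then S.obj W
    else if i = n-1 then Z else big.obj i with hvOdef
  have hvO0 : vO 0 = Z := by simp [hvOdef]
  have hvO1 : vO 1 = S.obj W := by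
    rw [hvOdef]; dsimp only; rw [if_neg (by omega), if_pos rfl]
  have hvOl : vO (n-1) = Z := by
    rw [hvOdef]; dsimp only
    rw [if_neg (by omega), if_neg (by omega), if_pos rfl]
  set ιv : ∀ i, vO i ≅ big.obj i := fun i =>
    if h0 : i = 0 then
      eqToIso ((congrArg vO h0).trans hvO0) ≪≫ isoBiprodZeroRight hNw0 ≪≫
        eqToIso (show (t.obj 0 ⊞ w.obj 0) = big.obj i from congrArg big.obj h0.symm)
    else if h1 : i = 1 then
      eqToIso ((congrArg vO h1).trans hvO1) ≪≫ cou (big.obj 1) ≪≫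
        eqToIso (congrArg big.obj h1.symm)
    else if hl : i = n-1 then
      eqToIso ((congrArg vO hl).trans hvOl) ≪≫ isoBiprodZeroLeft hNtl ≪≫
        eqToIso (congrArg (fun x => (t.obj (n-1) ⊞ x)) (tailObj_in (n := n) (Z := Z) (i := n-1) (by omega) le_rfl).symm) ≪≫
        eqToIso (show (t.obj (n-1) ⊞ w.obj (n-1)) = big.obj i from congrArg big.obj hl.symm)
    else eqToIso (by rw [hvOdef]; dsimp only; rw [if_neg h0, if_neg h1, if_neg hl])
    with hιvdef
  have hvAng : isoImage big vO ιv ∈ Ang := isoImage_mem hAng hbigAng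
  have hobjs : objsIn A (isoImage big vO ιv) := by
    refine hA _ hvAng ?_ ?_
    · show vO 0 ∈ A
      rw [hvO0]; exact hZ
    · show vO (n-1) ∈ A
      rw [hvOl]; exact hZ
  have hWA : S.obj W ∈ A := by
    have := hobjs 1 (by omega)
    rw [show (isoImage big vO ιv).obj 1 = vO 1 from rfl, hvO1] at this
    exact this
  refine ⟨W, hWA, (cou (big.obj 1)).hom ≫
      (biprod.fst : t.obj 1 ⊞ w.obj 1 ⟶ t.obj 1) ≫ eqToHom (trivial_obj_one Z),
    eqToHom (trivial_obj_one Z).symm ≫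
      (biprod.inl : t.obj 1 ⟶ t.obj 1 ⊞ w.obj 1) ≫ (cou (big.obj 1)).inv, ?_⟩
  erw [Category.assoc, Category.assoc, Iso.inv_hom_id_assoc, biprod.inl_fst_assoc,
    eqToHom_trans, eqToHom_refl]

end Aux7

end IdealApprox

open IdealApprox

set_option maxHeartbeats 1600000

/-- `I ⊆ Φ_E(PB_E(I)) ⊆ ⊥(I^⊥)` with equalities for special precovering ideals, and
the dual statement. -/
theorem stmt_18 {T : Type u} [Category.{v} T] [Preadditive T] [HasZeroObject T]
    [HasBinaryBiproducts T] (S : T ⥤ T) [S.IsEquivalence] {n : ℕ} (hn : 3 ≤ n)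
    (Ang : Set (NSeq n T S)) (hAng : IsNAngulated Ang)
    (A : Set T) (hA : ClosedUnderExtensions Ang A)
    (E : Set (NSeq n T S)) (hE : IsAlmostNExact Ang A E)
    (I J : MorphismProperty T) :
    (IsIdeal A I →
      I ≤ relPhant A E (PB E I) ∧
      relPhant A E (PB E I) ≤ perpLeft A E (perpRight A E I) ∧
      (SpecialPrecovering A E I →
        I = relPhant A E (PB E I) ∧
        relPhant A E (PB E I) = perpLeft A E (perpRight A E I))) ∧
    (IsIdeal A J →
      J ≤ relCophant A E (PO E J) ∧
      relCophant A E (PO E J) ≤ perpRight A E (perpLeft A E J) ∧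
      (SpecialPreenveloping A E J →
        J = relCophant A E (PO E J) ∧
        relCophant A E (PO E J) = perpRight A E (perpLeft A E J))) := by
  constructor
  · -- the `I` side
    intro hI
    have part1 : I ≤ relPhant A E (PB E I) := by
      intro X Z f hf
      refine ⟨hI.src_mem f hf, hI.tgt_mem f hf, ?_⟩
      intro B h hh
      obtain ⟨d, hdE, hXd, hYd, hheq⟩ := hh
      obtain ⟨e, heE, h0, h1, hph⟩ :=
        baseChangeE hAng hn hA hE hdE (hI.src_mem f hf) (f ≫ eqToHom hXd.symm)
      refine ⟨e, ⟨heE, d.obj (n-1), eqToHom h1 ≫ f ≫ eqToHom hXd.symm,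
        d.phantom ≫ eqToHom (congrArg S.obj h0).symm, ?_, ?_, ?_⟩,
        h1, (congrArg S.obj h0).trans hYd, ?_⟩
      · have hi := hI.comp_mem (eqToHom h1) f (eqToHom hXd.symm)
          (by rw [h1]; exact hI.src_mem f hf)
          ((hE.subset_DA hdE).2 (n-1) (by omega)) hf
        exact hi
      · exact ⟨d, hdE, rfl, (congrArg S.obj h0).symm, by simp⟩
      · rw [hph]
        simp only [Category.assoc]
      · rw [hheq, hph]
        simp only [Category.assoc, eqToHom_trans, eqToHom_trans_assoc, eqToHom_refl,
          Category.id_comp, Category.comp_id]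
    have part2 : relPhant A E (PB E I) ≤ perpLeft A E (perpRight A E I) := by
      intro X Z f hf
      obtain ⟨hXA, hZA, hfac⟩ := hf
      refine ⟨hXA, hZA, ?_⟩
      intro B Y m hm χ hχ
      obtain ⟨e, ⟨heE, C, i, ψ, hiI, hψ, hphfac⟩, hXe, hYe, hfχ⟩ := hfac χ hχ
      have hψ' : phant E (ψ ≫ eqToHom hYe) := by
        simpa using phant_conj rfl hYe hψ
      have horth := hm.2.2 i hiI (ψ ≫ eqToHom hYe) hψ'
      have : f ≫ χ ≫ S.map m = (eqToHom hXe.symm) ≫ (i ≫ (ψ ≫ eqToHom hYe) ≫ S.map m) := by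
        rw [← Category.assoc, hfχ, hphfac]
        simp only [Category.assoc]
      rw [this, horth, comp_zero]
    have part3 : SpecialPrecovering A E I → perpLeft A E (perpRight A E I) ≤ I := by
      intro hsp X Z f hf
      obtain ⟨hXA, hZA, horthf⟩ := hf
      obtain ⟨X₀, i, hiI, d, hdE, hX₀, hA₀, hieq, B, φ, j, hφ, hj, hphfac⟩ := hsp Z hZA
      have hA₀' : d.obj (n-1) = Z :=
        (congrArg d.obj (show n-1 = n-2+1 by omega)).trans hA₀
      have hχ : phant E (eqToHom hA₀'.symm ≫ φ) := by
        simpa using phant_conj hA₀' rfl hφ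
      have hzero : (f ≫ eqToHom hA₀'.symm) ≫ d.phantom = 0 := by
        rw [hphfac]
        have := horthf j hj (eqToHom hA₀'.symm ≫ φ) hχ
        simpa only [Category.assoc] using this
      obtain ⟨g, hg⟩ := factor_last hAng hn (hE.subset_DA hdE).1
        (f ≫ eqToHom hA₀'.symm) hzero
      have hg2 : g ≫ d.mor (n-2) ≫ eqToHom hA₀ = f := by
        have := congrArg (fun z => z ≫ eqToHom hA₀') hg
        simpa only [Category.assoc, eqToHom_trans, eqToHom_trans_assoc, eqToHom_refl,
          Category.id_comp, Category.comp_id] using this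
      have hfI := hI.comp_mem (g ≫ eqToHom hX₀) i (𝟙 Z) hXA hZA hiI
      have heq : (g ≫ eqToHom hX₀) ≫ i ≫ 𝟙 Z = f := by
        rw [hieq]
        simp only [Category.assoc, Category.comp_id, eqToHom_trans_assoc, eqToHom_refl,
          Category.id_comp]
        exact hg2
      exact heq ▸ hfI
    exact ⟨part1, part2, fun hsp =>
      ⟨le_antisymm part1 (le_trans part2 (part3 hsp)),
       le_antisymm part2 (le_trans (part3 hsp) part1)⟩⟩
  · -- the `J` side
    intro hJ
    have part1 : J ≤ relCophant A E (PO E J) := by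
      intro Z Y g hg
      refine ⟨hJ.src_mem g hg, hJ.tgt_mem g hg, ?_⟩
      intro W h hh
      obtain ⟨d, hdE, hXd, hYd, hheq⟩ := hh
      have hg'J : J (S.preimage (eqToHom hYd ≫ S.map g)) := by
        have hpre : S.preimage (eqToHom hYd ≫ S.map g) =
            S.preimage (eqToHom hYd) ≫ g ≫ 𝟙 Y := by
          apply S.map_injective
          simp only [Functor.map_preimage, Functor.map_comp, Category.comp_id]
        rw [hpre]
        exact hJ.comp_mem _ g _ ((hE.subset_DA hdE).2 0 (by omega))
          (hJ.tgt_mem g hg) hg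
      obtain ⟨e, heE, h0, h1, hph⟩ := cobaseChangeE hAng hn hA hE hdE
        (hJ.tgt_mem g hg) (S.preimage (eqToHom hYd ≫ S.map g))
      refine ⟨e, ⟨heE, d.obj 0, eqToHom h1 ≫ d.phantom,
        S.preimage (eqToHom hYd ≫ S.map g) ≫ eqToHom h0.symm, ?_, ?_, ?_⟩,
        h1.trans hXd, congrArg S.obj h0, ?_⟩
      · exact ⟨d, hdE, h1.symm, rfl, by simp⟩
      · have := hJ.comp_mem (𝟙 (d.obj 0)) (S.preimage (eqToHom hYd ≫ S.map g))
          (eqToHom h0.symm) ((hE.subset_DA hdE).2 0 (by omega))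
          (by rw [h0]; exact hJ.tgt_mem g hg) hg'J
        simpa only [Category.id_comp] using this
      · rw [hph]
        simp only [Category.assoc, Functor.map_comp, eqToHom_map]
      · rw [Functor.map_comp, hheq, hph]
        simp only [Category.assoc, Functor.map_comp, Functor.map_preimage, eqToHom_map,
          eqToHom_trans, eqToHom_trans_assoc, eqToHom_refl, Category.id_comp,
          Category.comp_id]
    have part2 : relCophant A E (PO E J) ≤ perpRight A E (perpLeft A E J) := by
      intro Z Y g hg
      obtain ⟨hZA, hYA, hcoph⟩ := hg
      refine ⟨hZA, hYA, ?_⟩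
      intro X Z₀ m hm φ hφ
      obtain ⟨hXA', hZ₀A, hmj⟩ := hm
      obtain ⟨d, hdE, hXd, hYd, hφeq⟩ := hφ
      obtain ⟨W, hWA, u, s, hsu⟩ := retract_exists hAng hn hA hZ₀A
      obtain ⟨e, heE, h0, h1, hph⟩ :=
        baseChangeE hAng hn hA hE hdE hWA (u ≫ eqToHom hXd.symm)
      have hq' : phant E (S.map (S.preimage (eqToHom h1.symm ≫ e.phantom ≫
          eqToHom ((congrArg S.obj h0).trans hYd)))) := by
        rw [Functor.map_preimage]
        exact ⟨e, heE, h1, (congrArg S.obj h0).trans hYd, rfl⟩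
      obtain ⟨e', ⟨he'E, B₁, ψ₁, j₁, hψ₁, hj₁, hfac⟩, hX'', hY'', heq2⟩ :=
        hcoph (S.preimage (eqToHom h1.symm ≫ e.phantom ≫
          eqToHom ((congrArg S.obj h0).trans hYd))) hq'
      have hχ : phant E (s ≫ eqToHom hX''.symm ≫ ψ₁) := by
        refine phant_precomp hAng hn hA hE ?_ hZ₀A s
        simpa using phant_conj hX'' rfl hψ₁
      have h0' := hmj j₁ hj₁ (s ≫ eqToHom hX''.symm ≫ ψ₁) hχ
      have hkey : u ≫ φ ≫ S.map g =
          eqToHom hX''.symm ≫ e'.phantom ≫ eqToHom hY'' := by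
        rw [← heq2, Functor.map_comp, Functor.map_preimage, hph, hφeq]
        simp only [Category.assoc, eqToHom_trans, eqToHom_trans_assoc, eqToHom_refl,
          Category.id_comp, Category.comp_id]
      have : m ≫ φ ≫ S.map g =
          (m ≫ (s ≫ eqToHom hX''.symm ≫ ψ₁) ≫ S.map j₁) ≫ eqToHom hY'' := by
        conv_lhs => rw [show φ = (s ≫ u) ≫ φ by rw [hsu, Category.id_comp]]
        rw [hfac] at hkey
        simp only [Category.assoc] at hkey ⊢
        rw [hkey]
      rw [this, h0', zero_comp]
    have part3 : SpecialPreenveloping A E J → perpRight A E (perpLeft A E J) ≤ J := by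
      intro hsp Z Y g hg
      obtain ⟨hZA, hYA, horth⟩ := hg
      obtain ⟨Y₀, j, hjJ, d, hdE, hB, hY₀, hjeq, C, i, φ, hiPerp, hφ, hfac⟩ := hsp Z hZA
      have hχ : phant E (φ ≫ eqToHom (congrArg S.obj hB)) := by
        simpa using phant_conj rfl (congrArg S.obj hB) hφ
      have hzero : d.phantom ≫ S.map (eqToHom hB ≫ g) = 0 := by
        rw [hfac, Functor.map_comp, eqToHom_map]
        have := horth i hiPerp (φ ≫ eqToHom (congrArg S.obj hB)) hχ
        simpa only [Category.assoc] using this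
      obtain ⟨g', hg'⟩ := factor_first hAng hn (hE.subset_DA hdE).1
        (eqToHom hB ≫ g) hzero
      have hgJ := hJ.comp_mem (𝟙 Z) j (eqToHom hY₀.symm ≫ g') hZA hYA hjJ
      have heq : 𝟙 Z ≫ j ≫ eqToHom hY₀.symm ≫ g' = g := by
        rw [hjeq]
        simp only [Category.assoc, Category.id_comp, eqToHom_trans_assoc, eqToHom_refl]
        have := congrArg (fun z => eqToHom hB.symm ≫ z) hg'
        simpa only [Category.assoc, eqToHom_trans_assoc, eqToHom_refl,
          Category.id_comp] using this
      exact heq ▸ hgJ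
    exact ⟨part1, part2, fun hsp =>
      ⟨le_antisymm part1 (le_trans part2 (part3 hsp)),
       le_antisymm part2 (le_trans (part3 hsp) part1)⟩⟩
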